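/- arXiv:1312.4769 — 6 statements merged into one kernel-verified Lean document; each statement's English description precedes it below -/
import Mathlib

section
/- Let H be a |w|-Hom-configuration. Then H is a left |w|-Riedtmann configuration if and only if there are at most |w| − 1 isolated vertices with no overarc. -/
/- Combinatorial model of the triangulated category `T_w` generated by a `w`-spherical
object (`w ≤ -1`), via `d`-admissible arcs of the ∞-gon, where `d = w - 1`,
`|d| = 1 - w`, `|w| = -w`. -/

namespace SphericalArcs

/-- An arc is a pair of integers `(t, u)`. -/
abbrev Arc : Type := ℤ × ℤ

/-- `(t,u)` is a `d`-admissible arc: `t > u`, `t - u ≥ |d| - 1 = -w` and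
`t - u ≡ -1 (mod |d|)`, i.e. `(1 - w) ∣ (t - u + 1)`. -/
def Adm (w : ℤ) (a : Arc) : Prop :=
  a.2 < a.1 ∧ -w ≤ a.1 - a.2 ∧ (1 - w) ∣ (a.1 - a.2 + 1)

/-- `k(t,u) = (t - u + 1) / |d|`. -/
def kk (w : ℤ) (a : Arc) : ℤ := (a.1 - a.2 + 1) / (1 - w)

/-- `c ∈ F⁺(a)`: `c = (x,y)` is `d`-admissible, `x = a.1 + i·d` for some
`0 ≤ i ≤ k(a) - 1`, and `y ≤ a.2`. -/
def Fplus (w : ℤ) (a c : Arc) : Prop :=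
  Adm w c ∧ (∃ i : ℤ, 0 ≤ i ∧ i ≤ kk w a - 1 ∧ c.1 = a.1 + i * (w - 1)) ∧ c.2 ≤ a.2

/-- `c ∈ F⁻(a)`: `c = (x,y)` is `d`-admissible, `y = a.2 - i·d` for some
`0 ≤ i ≤ k(a) - 1`, and `x ≥ a.1`. -/
def Fminus (w : ℤ) (a c : Arc) : Prop :=
  Adm w c ∧ (∃ i : ℤ, 0 ≤ i ∧ i ≤ kk w a - 1 ∧ c.2 = a.2 - i * (w - 1)) ∧ a.1 ≤ c.1

/-- The Serre functor: `S(t,u) = (t - w, u - w)`. -/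
def Serre (w : ℤ) (a : Arc) : Arc := (a.1 - w, a.2 - w)

/-- `Hom(a,c) ≠ 0` iff `c ∈ F⁺(a) ∪ F⁻(S(a))`. -/
def HomNe (w : ℤ) (a c : Arc) : Prop := Fplus w a c ∨ Fminus w (Serre w a) c

/-- `Ext^j(a,b) ≠ 0` iff `Hom(a, Σ^j b) ≠ 0`, where `Σ^j b = (b.1 - j, b.2 - j)`. -/
def ExtNe (w : ℤ) (j : ℤ) (a b : Arc) : Prop := HomNe w a (b.1 - j, b.2 - j)

/-- Two arcs `(t,u)` and `(t',u')` cross if `u < u' < t < t'` or `u' < u < t' < t`. -/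
def Cross (a b : Arc) : Prop :=
  (a.2 < b.2 ∧ b.2 < a.1 ∧ a.1 < b.1) ∨ (b.2 < a.2 ∧ a.2 < b.1 ∧ b.1 < a.1)

/-- Two arcs share a vertex if `{t,u} ∩ {t',u'} ≠ ∅`. -/
def ShareVertex (a b : Arc) : Prop :=
  a.1 = b.1 ∨ a.1 = b.2 ∨ a.2 = b.1 ∨ a.2 = b.2

/-- A `|w|`-Hom-configuration: a set `H` of `d`-admissible arcs such that a
`d`-admissible arc `h` belongs to `H` iff `Ext^i(x,h) = 0` for every `x ∈ H` and
`i ∈ {w+1, …, -1}`, and `Ext^i(x,h) = 0` for every `x ∈ H \ {h}` and `i ∈ {0, w}`. -/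
def IsHomConfig (w : ℤ) (H : Set Arc) : Prop :=
  (∀ h ∈ H, Adm w h) ∧
  ∀ h : Arc, Adm w h →
    (h ∈ H ↔
      (∀ x ∈ H, ∀ i : ℤ, w + 1 ≤ i → i ≤ -1 → ¬ ExtNe w i x h) ∧
      (∀ x ∈ H, x ≠ h → ¬ ExtNe w 0 x h ∧ ¬ ExtNe w w x h))

/-- `v` is an isolated vertex of `H`: it is not an endpoint of any arc of `H`. -/
def Isolated (H : Set Arc) (v : ℤ) : Prop := ∀ a ∈ H, a.1 ≠ v ∧ a.2 ≠ v

/-- `a ∈ H` is an overarc of `v`: `a.2 < v < a.1`. -/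
def IsOverarc (H : Set Arc) (a : Arc) (v : ℤ) : Prop := a ∈ H ∧ a.2 < v ∧ v < a.1

/-- `a` is the smallest overarc of `v` in `H`. -/
def IsSmallestOverarc (H : Set Arc) (a : Arc) (v : ℤ) : Prop :=
  IsOverarc H a v ∧ ∀ b : Arc, IsOverarc H b v → b.2 ≤ a.2 ∧ a.1 ≤ b.1

/-- The set of isolated vertices of `H` having no overarc in `H`. -/
def NoOverarcIsolated (H : Set Arc) : Set ℤ :=
  {v | Isolated H v ∧ ∀ a : Arc, ¬ IsOverarc H a v}

/-- A left `|w|`-Riedtmann configuration. -/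
def IsLeftRiedtmann (w : ℤ) (C : Set Arc) : Prop :=
  (∀ c ∈ C, Adm w c) ∧
  (∀ x ∈ C, ∀ y ∈ C, x ≠ y → ∀ i : ℤ, w ≤ i → i ≤ 0 → ¬ ExtNe w i x y) ∧
  ∀ z : Arc, Adm w z → ∃ x ∈ C, ∃ i : ℤ, w + 1 ≤ i ∧ i ≤ 0 ∧ ExtNe w i x z

/-- A right `|w|`-Riedtmann configuration. -/
def IsRightRiedtmann (w : ℤ) (C : Set Arc) : Prop :=
  (∀ c ∈ C, Adm w c) ∧
  (∀ x ∈ C, ∀ y ∈ C, x ≠ y → ∀ i : ℤ, w ≤ i → i ≤ 0 → ¬ ExtNe w i x y) ∧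
  ∀ z : Arc, Adm w z → ∃ x ∈ C, ∃ i : ℤ, w + 1 ≤ i ∧ i ≤ 0 ∧ ExtNe w i z x


section Aux
open scoped Classical

/-! ### arithmetic helpers -/

lemma fac_nonneg {c j : ℤ} (hc : 0 < c) (h : 0 ≤ j * c) : 0 ≤ j := by
  by_contra hj
  push_neg at hj
  have : j * c ≤ -1 * c := mul_le_mul_of_nonneg_right (by omega) (le_of_lt hc)
  omega

lemma fac_le {c j l : ℤ} (hc : 0 < c) (h : j * c ≤ l * c) : j ≤ l :=
  le_of_mul_le_mul_right h hc

/-- if `c ∣ X` and `X > -c` then `X ≥ 0` -/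
lemma dvd_big {c X : ℤ} (hc : 0 < c) (hd : c ∣ X) (h1 : -c < X) : 0 ≤ X := by
  obtain ⟨j, rfl⟩ := hd
  rcases le_or_gt 0 j with hj | hj
  · positivity
  · have : c * j ≤ c * (-1) := by
      apply mul_le_mul_of_nonneg_left (by omega) (le_of_lt hc)
    omega

/-- if `c ∣ X` and `X < c` then `X ≤ 0` -/
lemma dvd_small {c X : ℤ} (hc : 0 < c) (hd : c ∣ X) (h2 : X < c) : X ≤ 0 := by
  obtain ⟨j, rfl⟩ := hd
  rcases le_or_gt j 0 with hj | hj
  · exact mul_nonpos_of_nonneg_of_nonpos (le_of_lt hc) hj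
  · have : c * 1 ≤ c * j := by
      apply mul_le_mul_of_nonneg_left (by omega) (le_of_lt hc)
    omega

lemma dvd_none {c X : ℤ} (hc : 0 < c) (hd : c ∣ X) (h1 : 0 < X) (h2 : X < c) : False := by
  have := dvd_small hc hd h2; omega

/-! ### basic Adm facts -/

lemma adm_shift {w : ℤ} {a : Arc} (i : ℤ) (h : Adm w a) : Adm w (a.1 - i, a.2 - i) := by
  obtain ⟨h1, h2, h3⟩ := h
  refine ⟨by simp; omega, by simp; omega, ?_⟩
  have : a.1 - i - (a.2 - i) + 1 = a.1 - a.2 + 1 := by ring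
  simpa [this] using h3

lemma kk_spec {w : ℤ} (hw : w ≤ -1) {a : Arc} (h : Adm w a) :
    a.1 - a.2 + 1 = kk w a * (1 - w) ∧ 1 ≤ kk w a := by
  obtain ⟨h1, h2, h3⟩ := h
  have hm : (0:ℤ) < 1 - w := by omega
  have heq : kk w a * (1 - w) = a.1 - a.2 + 1 := Int.ediv_mul_cancel h3
  constructor
  · omega
  · have : 1 * (1 - w) ≤ kk w a * (1 - w) := by omega
    exact fac_le hm this

lemma kk_serre {w : ℤ} (a : Arc) : kk w (Serre w a) = kk w a := by
  unfold kk Serre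
  norm_num

/-! ### Ext witness (sufficiency) lemmas -/

/-- branch `F⁺`: general version, `i ∈ [w,0]` -/
lemma extA {w : ℤ} (hw : w ≤ -1) {x z : Arc} (hx : Adm w x) (hz : Adm w z) (n : ℤ)
    (hn0 : 0 ≤ n) (hnk : n ≤ kk w x - 1)
    (h1 : 0 ≤ x.1 - z.1 - n * (1 - w)) (h2 : x.1 - z.1 - n * (1 - w) ≤ -w)
    (h3 : x.1 - x.2 - n * (1 - w) ≤ z.1 - z.2) :
    ∃ i : ℤ, w ≤ i ∧ i ≤ 0 ∧ ExtNe w i x z := by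
  refine ⟨z.1 - x.1 + n * (1 - w), by omega, by omega, Or.inl ?_⟩
  refine ⟨adm_shift _ hz, ⟨n, hn0, hnk, ?_⟩, ?_⟩
  · show z.1 - (z.1 - x.1 + n * (1 - w)) = x.1 + n * (w - 1)
    ring
  · show z.2 - (z.1 - x.1 + n * (1 - w)) ≤ x.2
    omega

/-- branch `F⁻`: general version, `i ∈ [w,0]` -/
lemma extB {w : ℤ} (hw : w ≤ -1) {x z : Arc} (hx : Adm w x) (hz : Adm w z) (n : ℤ)
    (hn0 : 0 ≤ n) (hnk : n ≤ kk w x - 1)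
    (h1 : 0 ≤ z.2 - x.2 - n * (1 - w)) (h2 : z.2 - x.2 - n * (1 - w) ≤ -w)
    (h3 : x.1 - x.2 - n * (1 - w) ≤ z.1 - z.2) :
    ∃ i : ℤ, w ≤ i ∧ i ≤ 0 ∧ ExtNe w i x z := by
  refine ⟨z.2 - x.2 + w - n * (1 - w), by omega, by omega, Or.inr ?_⟩
  refine ⟨adm_shift _ hz, ⟨n, hn0, ?_, ?_⟩, ?_⟩
  · rw [kk_serre]; omega
  · show z.2 - (z.2 - x.2 + w - n * (1 - w)) = (Serre w x).2 - n * (w - 1)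
    unfold Serre; ring
  · show (Serre w x).1 ≤ z.1 - (z.2 - x.2 + w - n * (1 - w))
    unfold Serre; simp; omega

/-- branch `F⁺`, sharp version: `i ∈ [w+1,0]` -/
lemma extA_cov {w : ℤ} (hw : w ≤ -1) {x z : Arc} (hx : Adm w x) (hz : Adm w z) (n : ℤ)
    (hn0 : 0 ≤ n) (hnk : n ≤ kk w x - 1)
    (h1 : 0 ≤ x.1 - z.1 - n * (1 - w)) (h2 : x.1 - z.1 - n * (1 - w) ≤ -w - 1)
    (h3 : x.1 - x.2 - n * (1 - w) ≤ z.1 - z.2) :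
    ∃ i : ℤ, w + 1 ≤ i ∧ i ≤ 0 ∧ ExtNe w i x z := by
  refine ⟨z.1 - x.1 + n * (1 - w), by omega, by omega, Or.inl ?_⟩
  refine ⟨adm_shift _ hz, ⟨n, hn0, hnk, ?_⟩, ?_⟩
  · show z.1 - (z.1 - x.1 + n * (1 - w)) = x.1 + n * (w - 1)
    ring
  · show z.2 - (z.1 - x.1 + n * (1 - w)) ≤ x.2
    omega

/-- branch `F⁻`, sharp version: `i ∈ [w+1,0]` -/
lemma extB_cov {w : ℤ} (hw : w ≤ -1) {x z : Arc} (hx : Adm w x) (hz : Adm w z) (n : ℤ)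
    (hn0 : 0 ≤ n) (hnk : n ≤ kk w x - 1)
    (h1 : 1 ≤ z.2 - x.2 - n * (1 - w)) (h2 : z.2 - x.2 - n * (1 - w) ≤ -w)
    (h3 : x.1 - x.2 - n * (1 - w) ≤ z.1 - z.2) :
    ∃ i : ℤ, w + 1 ≤ i ∧ i ≤ 0 ∧ ExtNe w i x z := by
  refine ⟨z.2 - x.2 + w - n * (1 - w), by omega, by omega, Or.inr ?_⟩
  refine ⟨adm_shift _ hz, ⟨n, hn0, ?_, ?_⟩, ?_⟩
  · rw [kk_serre]; omega
  · show z.2 - (z.2 - x.2 + w - n * (1 - w)) = (Serre w x).2 - n * (w - 1)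
    unfold Serre; ring
  · show (Serre w x).1 ≤ z.1 - (z.2 - x.2 + w - n * (1 - w))
    unfold Serre; simp; omega

/-- necessity: decompose an Ext witness -/
lemma ext_cases {w : ℤ} (hw : w ≤ -1) {x z : Arc} (hx : Adm w x) {i : ℤ}
    (hiw : w ≤ i) (hi0 : i ≤ 0) (h : ExtNe w i x z) :
    ∃ n : ℤ, 0 ≤ n ∧ n ≤ kk w x - 1 ∧ x.1 - x.2 - n * (1 - w) ≤ z.1 - z.2 ∧
      (x.1 - z.1 - n * (1 - w) = -i ∨ z.2 - x.2 - n * (1 - w) = i - w) := by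
  rcases h with ⟨_, ⟨n, hn0, hnk, hc1⟩, hc2⟩ | ⟨_, ⟨n, hn0, hnk, hc2⟩, hc1⟩
  · -- Fplus : z.1 - i = x.1 + n*(w-1)
    refine ⟨n, hn0, hnk, ?_, Or.inl ?_⟩
    · simp only at hc1 hc2
      have hr : n * (w - 1) = -(n * (1 - w)) := by ring
      rw [hr] at hc1
      omega
    · simp only at hc1
      have hr : n * (w - 1) = -(n * (1 - w)) := by ring
      rw [hr] at hc1
      omega
  · -- Fminus : z.2 - i = (x.2 - w) - n*(w-1), z.1 - i ≥ x.1 - w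
    rw [kk_serre] at hnk
    refine ⟨n, hn0, hnk, ?_, Or.inr ?_⟩
    · simp only [Serre] at hc1 hc2
      have hr : n * (w - 1) = -(n * (1 - w)) := by ring
      rw [hr] at hc2
      omega
    · simp only [Serre] at hc2
      have hr : n * (w - 1) = -(n * (1 - w)) := by ring
      rw [hr] at hc2
      omega



/-! ### Ext vs crossing/sharing -/

lemma U1 {w : ℤ} (hw : w ≤ -1) {a b : Arc} (ha : Adm w a) (hb : Adm w b)
    (hcs : Cross a b ∨ ShareVertex a b) :
    ∃ i : ℤ, w ≤ i ∧ i ≤ 0 ∧ ExtNe w i a b := by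
  have hm : (0:ℤ) < 1 - w := by omega
  obtain ⟨hk, hk1⟩ := kk_spec hw ha
  have haa := ha; have hbb := hb
  obtain ⟨ha1, ha2, ha3⟩ := haa
  obtain ⟨hb1, hb2, hb3⟩ := hbb
  rcases hcs with (⟨c1, c2, c3⟩ | ⟨c1, c2, c3⟩) | hs
  · -- a.2 < b.2 < a.1 < b.1 : cross type 1, use extB
    set n := (b.2 - a.2) / (1 - w) with hn
    have hdm := Int.mul_ediv_add_emod (b.2 - a.2) (1 - w)
    have hr0 := Int.emod_nonneg (b.2 - a.2) (by omega : (1:ℤ) - w ≠ 0)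
    have hr1 := Int.emod_lt_of_pos (b.2 - a.2) hm
    set r := (b.2 - a.2) % (1 - w) with hrdef
    have heq : b.2 - a.2 = n * (1 - w) + r := by rw [hn, mul_comm]; omega
    have hn0 : 0 ≤ n := by
      have : -(1 - w) < n * (1 - w) := by nlinarith [heq]
      have := dvd_big hm ⟨n, mul_comm n (1-w) ▸ rfl⟩ this
      exact fac_nonneg hm this
    have hnk : n ≤ kk w a - 1 := by
      have h1 : n * (1 - w) ≤ a.1 - a.2 - 1 := by omega
      have h2 : n * (1 - w) < kk w a * (1 - w) := by omega
      have := fac_le hm (show (n+1) * (1-w) ≤ kk w a * (1-w) by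
        have hd : (1 - w) ∣ (kk w a * (1-w) - n * (1-w)) := ⟨kk w a - n, by ring⟩
        have : 0 < kk w a * (1-w) - n * (1-w) := by omega
        have := Int.le_of_dvd this hd
        nlinarith)
      omega
    have h3 : a.1 - a.2 - n * (1 - w) ≤ b.1 - b.2 := by
      have hd : (1 - w) ∣ ((b.1 - b.2) - (a.1 - a.2) + n * (1 - w)) := by
        have : (b.1 - b.2) - (a.1 - a.2) + n * (1 - w)
            = (b.1 - b.2 + 1) - (a.1 - a.2 + 1) + n * (1 - w) := by ring
        rw [this]
        exact dvd_add (dvd_sub hb3 ha3) ⟨n, mul_comm n (1-w) ▸ rfl⟩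
      have hgt : -(1 - w) < (b.1 - b.2) - (a.1 - a.2) + n * (1 - w) := by omega
      have := dvd_big hm hd hgt
      omega
    exact extB hw ha hb n hn0 hnk (by omega) (by omega) h3
  · -- b.2 < a.2 < b.1 < a.1 : cross type 2, use extA
    set n := (a.1 - b.1) / (1 - w) with hn
    have hdm := Int.mul_ediv_add_emod (a.1 - b.1) (1 - w)
    have hr0 := Int.emod_nonneg (a.1 - b.1) (by omega : (1:ℤ) - w ≠ 0)
    have hr1 := Int.emod_lt_of_pos (a.1 - b.1) hm
    set r := (a.1 - b.1) % (1 - w) with hrdef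
    have heq : a.1 - b.1 = n * (1 - w) + r := by rw [hn, mul_comm]; omega
    have hn0 : 0 ≤ n := by
      have : -(1 - w) < n * (1 - w) := by nlinarith [heq]
      have := dvd_big hm ⟨n, mul_comm n (1-w) ▸ rfl⟩ this
      exact fac_nonneg hm this
    have hnk : n ≤ kk w a - 1 := by
      have h1 : n * (1 - w) ≤ a.1 - a.2 - 1 := by omega
      have := fac_le hm (show (n+1) * (1-w) ≤ kk w a * (1-w) by
        have hd : (1 - w) ∣ (kk w a * (1-w) - n * (1-w)) := ⟨kk w a - n, by ring⟩
        have : 0 < kk w a * (1-w) - n * (1-w) := by omega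
        have := Int.le_of_dvd this hd
        nlinarith)
      omega
    have h3 : a.1 - a.2 - n * (1 - w) ≤ b.1 - b.2 := by
      have hd : (1 - w) ∣ ((b.1 - b.2) - (a.1 - a.2) + n * (1 - w)) := by
        have : (b.1 - b.2) - (a.1 - a.2) + n * (1 - w)
            = (b.1 - b.2 + 1) - (a.1 - a.2 + 1) + n * (1 - w) := by ring
        rw [this]
        exact dvd_add (dvd_sub hb3 ha3) ⟨n, mul_comm n (1-w) ▸ rfl⟩
      have hgt : -(1 - w) < (b.1 - b.2) - (a.1 - a.2) + n * (1 - w) := by omega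
      have := dvd_big hm hd hgt
      omega
    exact extA hw ha hb n hn0 hnk (by omega) (by omega) h3
  · -- share cases
    rcases hs with h | h | h | h
    · -- a.1 = b.1
      rcases le_or_gt (a.1 - a.2) (b.1 - b.2) with hL | hL
      · exact extA hw ha hb 0 le_rfl (by omega) (by omega) (by omega) (by omega)
      · -- use extB with n := (D - L)/m
        have hd : (1 - w) ∣ ((a.1 - a.2) - (b.1 - b.2)) := by
          have : (a.1 - a.2) - (b.1 - b.2) = (a.1 - a.2 + 1) - (b.1 - b.2 + 1) := by ring
          rw [this]; exact dvd_sub ha3 hb3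
        obtain ⟨s, hs⟩ := hd
        have hseq : (a.1 - a.2) - (b.1 - b.2) = s * (1 - w) := by rw [hs]; ring
        have hs0 : 0 ≤ s := fac_nonneg hm (by omega)
        have hsk : s ≤ kk w a - 1 := by
          have : s * (1 - w) ≤ (kk w a - 1) * (1 - w) := by
            have : (kk w a - 1) * (1 - w) = kk w a * (1 - w) - (1 - w) := by ring
            omega
          exact fac_le hm this
        refine extB hw ha hb s hs0 hsk (by omega) (by omega) (by omega)
    · -- a.1 = b.2
      refine extB hw ha hb (kk w a - 1) (by omega) le_rfl ?_ ?_ ?_ <;>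
      · have : (kk w a - 1) * (1 - w) = kk w a * (1 - w) - (1 - w) := by ring
        omega
    · -- a.2 = b.1
      refine extA hw ha hb (kk w a - 1) (by omega) le_rfl ?_ ?_ ?_ <;>
      · have : (kk w a - 1) * (1 - w) = kk w a * (1 - w) - (1 - w) := by ring
        omega
    · -- a.2 = b.2
      rcases le_or_gt (a.1 - a.2) (b.1 - b.2) with hL | hL
      · exact extB hw ha hb 0 le_rfl (by omega) (by omega) (by omega) (by omega)
      · have hd : (1 - w) ∣ ((a.1 - a.2) - (b.1 - b.2)) := by
          have : (a.1 - a.2) - (b.1 - b.2) = (a.1 - a.2 + 1) - (b.1 - b.2 + 1) := by ring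
          rw [this]; exact dvd_sub ha3 hb3
        obtain ⟨s, hs⟩ := hd
        have hseq : (a.1 - a.2) - (b.1 - b.2) = s * (1 - w) := by rw [hs]; ring
        have hs0 : 0 ≤ s := fac_nonneg hm (by omega)
        have hsk : s ≤ kk w a - 1 := by
          have : s * (1 - w) ≤ (kk w a - 1) * (1 - w) := by
            have : (kk w a - 1) * (1 - w) = kk w a * (1 - w) - (1 - w) := by ring
            omega
          exact fac_le hm this
        refine extA hw ha hb s hs0 hsk (by omega) (by omega) (by omega)

lemma U2 {w : ℤ} (hw : w ≤ -1) {a b : Arc} (ha : Adm w a) (hb : Adm w b)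
    (hnc1 : ¬Cross a b) (hnc2 : ¬ShareVertex a b) {i : ℤ}
    (hiw : w ≤ i) (hi0 : i ≤ 0) : ¬ExtNe w i a b := by
  intro h
  have hm : (0:ℤ) < 1 - w := by omega
  obtain ⟨hk, hk1⟩ := kk_spec hw ha
  obtain ⟨n, hn0, hnk, h3, hbr⟩ := ext_cases hw ha hiw hi0 h
  have hN0 : 0 ≤ n * (1 - w) := mul_nonneg hn0 (by omega)
  have hNk : n * (1 - w) ≤ (a.1 - a.2 + 1) - (1 - w) := by
    have h1 : n * (1 - w) ≤ (kk w a - 1) * (1 - w) :=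
      mul_le_mul_of_nonneg_right hnk (by omega)
    have h2 : (kk w a - 1) * (1 - w) = kk w a * (1 - w) - (1 - w) := by ring
    omega
  obtain ⟨ha1, ha2, ha3⟩ := ha
  obtain ⟨hb1, hb2, hb3⟩ := hb
  unfold Cross at hnc1
  unfold ShareVertex at hnc2
  push_neg at hnc1 hnc2
  rcases hbr with hA | hB <;> omega

/-! ### consequences of being a Hom-configuration -/

section Config

variable {w : ℤ} {H : Set Arc}

lemma hadm (hH : IsHomConfig w H) : ∀ x ∈ H, Adm w x := hH.1

lemma hpair (hH : IsHomConfig w H) {x y : Arc} (hx : x ∈ H) (hy : y ∈ H) (hxy : x ≠ y)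
    {i : ℤ} (hiw : w ≤ i) (hi0 : i ≤ 0) : ¬ExtNe w i x y := by
  obtain ⟨cl1, cl2⟩ := ((hH.2 y (hH.1 y hy)).1 hy)
  by_cases h0 : i = 0
  · subst h0; exact (cl2 x hx hxy).1
  by_cases hwi : i = w
  · subst hwi; exact (cl2 x hx hxy).2
  · exact cl1 x hx i (by omega) (by omega)

lemma hNC (hw : w ≤ -1) (hH : IsHomConfig w H) {x y : Arc} (hx : x ∈ H) (hy : y ∈ H)
    (hxy : x ≠ y) : ¬Cross x y ∧ ¬ShareVertex x y := by
  by_contra hcon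
  have hcs : Cross x y ∨ ShareVertex x y := by
    rcases Classical.em (Cross x y) with h | h
    · exact Or.inl h
    · refine Or.inr ?_
      by_contra hs
      exact hcon ⟨h, hs⟩
  obtain ⟨i, hi1, hi2, he⟩ := U1 hw (hH.1 x hx) (hH.1 y hy) hcs
  exact hpair hH hx hy hxy hi1 hi2 he

lemma haddable (hw : w ≤ -1) (hH : IsHomConfig w H) {h : Arc} (hadm' : Adm w h)
    (hcomp : ∀ x ∈ H, x ≠ h → ¬Cross x h ∧ ¬ShareVertex x h) : h ∈ H := by
  by_cases hmem : h ∈ H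
  · exact hmem
  refine (hH.2 h hadm').2 ⟨?_, ?_⟩
  · intro x hx i hi1 hi2
    have hxh : x ≠ h := fun e => hmem (e ▸ hx)
    exact U2 hw (hH.1 x hx) hadm' (hcomp x hx hxh).1 (hcomp x hx hxh).2 (by omega) (by omega)
  · intro x hx hxh
    exact ⟨U2 hw (hH.1 x hx) hadm' (hcomp x hx hxh).1 (hcomp x hx hxh).2 (by omega) le_rfl,
      U2 hw (hH.1 x hx) hadm' (hcomp x hx hxh).1 (hcomp x hx hxh).2 le_rfl (by omega)⟩

lemma mem_S_iff (harcs : ∀ b ∈ H, b.2 < b.1) {v : ℤ} :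
    v ∈ NoOverarcIsolated H ↔ ∀ b ∈ H, ¬(b.2 ≤ v ∧ v ≤ b.1) := by
  constructor
  · rintro ⟨hiso, hov⟩ b hb ⟨h1, h2⟩
    obtain ⟨e1, e2⟩ := hiso b hb
    exact hov b ⟨hb, by omega, by omega⟩
  · intro h
    refine ⟨fun a ha => ?_, fun a ⟨ha, h1, h2⟩ => ?_⟩
    · have hlt := harcs a ha
      constructor <;> · intro e; exact (h a ha) (by constructor <;> omega)
    · exact (h a ha) (by constructor <;> omega)

/-- nesting: two noncrossing nonsharing arcs whose spans meet are nested -/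
lemma nest (hw : w ≤ -1) (hH : IsHomConfig w H) {b c : Arc} (hb : b ∈ H) (hc : c ∈ H)
    {v : ℤ} (h1 : b.2 ≤ v) (h2 : v ≤ b.1) (h3 : c.2 ≤ v) (h4 : v ≤ c.1) :
    (b.2 ≤ c.2 ∧ c.1 ≤ b.1) ∨ (c.2 ≤ b.2 ∧ b.1 ≤ c.1) := by
  by_cases hbc : b = c
  · subst hbc; left; exact ⟨le_rfl, le_rfl⟩
  obtain ⟨hnc, hns⟩ := hNC hw hH hb hc hbc
  unfold Cross at hnc; unfold ShareVertex at hns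
  push_neg at hnc hns
  omega

end Config

/-! ### the master counting lemma -/

section Counting

open scoped Classical in
/-- number of vertices of `[p,q)` not covered by the span of any arc of `G` -/
noncomputable def cnt (G : Set Arc) (p q : ℤ) : ℕ :=
  ((Finset.Ico p q).filter (fun v => ∀ b ∈ G, ¬(b.2 ≤ v ∧ v ≤ b.1))).card

def NotStrad (G : Set Arc) (v : ℤ) : Prop := ∀ b ∈ G, ¬(b.2 < v ∧ v ≤ b.1)

structure GoodFam (w : ℤ) (G : Set Arc) : Prop where
  lt : ∀ b ∈ G, b.2 < b.1
  dvd : ∀ b ∈ G, (1 - w) ∣ (b.1 - b.2 + 1)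
  nc : ∀ b ∈ G, ∀ c ∈ G, b ≠ c → ¬Cross b c ∧ ¬ShareVertex b c

open scoped Classical

lemma cnt_split (G : Set Arc) {p q r : ℤ} (h1 : p ≤ q) (h2 : q ≤ r) :
    cnt G p r = cnt G p q + cnt G q r := by
  unfold cnt
  rw [← Finset.Ico_union_Ico_eq_Ico h1 h2, Finset.filter_union,
    Finset.card_union_of_disjoint]
  exact Finset.disjoint_filter_filter (Finset.Ico_disjoint_Ico_consecutive p q r)

lemma cnt_le (G : Set Arc) (p q : ℤ) : (cnt G p q : ℤ) ≤ q - p ∨ q < p := by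
  rcases le_or_gt p q with h | h
  · left
    have := Finset.card_filter_le (Finset.Ico p q) (fun v => ∀ b ∈ G, ¬(b.2 ≤ v ∧ v ≤ b.1))
    unfold cnt
    rw [Int.card_Ico] at this
    omega
  · right; exact h

lemma cnt_le' (G : Set Arc) {p q : ℤ} (h : p ≤ q) : (cnt G p q : ℤ) ≤ q - p := by
  rcases cnt_le G p q with h' | h'
  · exact h'
  · omega

lemma cnt_zero_of_covered (G : Set Arc) {b : Arc} (hb : b ∈ G) {p q : ℤ}
    (h1 : b.2 ≤ p) (h2 : q ≤ b.1 + 1) : cnt G p q = 0 := by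
  unfold cnt
  rw [Finset.card_eq_zero, Finset.filter_eq_empty_iff]
  intro v hv
  rw [Finset.mem_Ico] at hv
  intro h
  exact (h b hb) ⟨by omega, by omega⟩

lemma MC {w : ℤ} (hw : w ≤ -1) {G : Set Arc} (hG : GoodFam w G) :
    ∀ N : ℕ, ∀ p q : ℤ, p ≤ q → q - p ≤ N → NotStrad G p → NotStrad G q →
      (1 - w) ∣ (q - p - cnt G p q) := by
  intro N
  induction N with
  | zero =>
    intro p q hpq hqp _ _
    have : p = q := by omega
    subst this
    simp [cnt]
  | succ N ih =>
    intro p q hpq hqp hp hq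
    rcases eq_or_lt_of_le hpq with heq | hlt
    · subst heq; simp [cnt]
    by_cases hb : ∃ b ∈ G, b.2 = p
    · obtain ⟨b, hbG, hbp⟩ := hb
      have hblt : b.2 < b.1 := hG.lt b hbG
      have hbt : b.1 < q := by
        by_contra hc
        exact hq b hbG ⟨by omega, by omega⟩
      have hord1 : p ≤ b.1 + 1 := by omega
      have hord2 : b.1 + 1 ≤ q := by omega
      have hz : cnt G p (b.1 + 1) = 0 :=
        cnt_zero_of_covered G hbG (by omega) le_rfl
      have hns : NotStrad G (b.1 + 1) := by
        intro b' hb' ⟨h1', h2'⟩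
        -- b'.2 ≤ b.1 < b'.1
        rcases lt_trichotomy b'.2 p with hlt' | heq' | hgt'
        · exact hp b' hb' ⟨by omega, by omega⟩
        · by_cases hne : b' = b
          · subst hne; omega
          · have hs4 := (hG.nc b' hb' b hbG hne).2
            unfold ShareVertex at hs4
            push_neg at hs4
            omega
        · -- p < b'.2 ≤ b.1 < b'.1
          by_cases hbb : b = b'
          · subst hbb; omega
          obtain ⟨hnc, hns'⟩ := hG.nc b hbG b' hb' hbb
          unfold Cross at hnc; unfold ShareVertex at hns'
          push_neg at hnc hns'
          omega
      have hrec := ih (b.1 + 1) q hord2 (by omega) hns hq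
      have hsp := cnt_split G hord1 hord2
      have hdb := hG.dvd b hbG
      have : q - p - (cnt G p q : ℤ)
          = (b.1 - b.2 + 1) + (q - (b.1+1) - (cnt G (b.1+1) q : ℤ)) := by
        rw [hsp, hz]; push_cast; omega
      rw [this]
      exact dvd_add hdb hrec
    · push_neg at hb
      have hpred : ∀ b ∈ G, ¬(b.2 ≤ p ∧ p ≤ b.1) := by
        intro b' hb' ⟨h1', h2'⟩
        rcases eq_or_lt_of_le h1' with he | hl
        · exact hb b' hb' he
        · exact hp b' hb' ⟨hl, h2'⟩
      have hone : cnt G p (p + 1) = 1 := by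
        unfold cnt
        rw [show Finset.Ico p (p+1) = {p} by ext v; simp [Finset.mem_Ico]; omega]
        rw [Finset.filter_singleton, if_pos hpred]
        rfl
      have hns : NotStrad G (p + 1) := by
        intro b' hb' ⟨h1', h2'⟩
        rcases lt_trichotomy b'.2 p with hlt' | heq' | hgt'
        · exact hp b' hb' ⟨by omega, by omega⟩
        · exact hb b' hb' heq'
        · omega
      have hrec := ih (p + 1) q (by omega) (by omega) hns hq
      have hsp := cnt_split G (show p ≤ p + 1 by omega) (show p + 1 ≤ q by omega)
      have : q - p - (cnt G p q : ℤ) = q - (p+1) - (cnt G (p+1) q : ℤ) := by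
        rw [hsp, hone]; push_cast; omega
      rw [this]
      exact hrec

end Counting

/-! ### extraction of a gap of the right residue -/

lemma extract : ∀ (M : ℕ), 1 ≤ M → ∀ F : Finset ℤ, ∀ hne : F.Nonempty, M ≤ F.card →
    ∃ q', q' ∈ F ∧ F.min' hne ≤ q' ∧ (F.filter (fun v => v < q')).card = M - 1 := by
  intro M
  induction M with
  | zero => omega
  | succ M ih =>
    intro _ F hne hcard
    by_cases hM : M = 0
    · subst hM
      refine ⟨F.min' hne, F.min'_mem hne, le_rfl, ?_⟩
      simp only [Nat.add_sub_cancel]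
      rw [Finset.card_eq_zero, Finset.filter_eq_empty_iff]
      intro v hv hlt
      exact absurd (F.min'_le v hv) (by omega)
    · set a := F.min' hne with ha
      set F' := F.erase a with hF'
      have hne' : F'.Nonempty := by
        rw [← Finset.card_pos, Finset.card_erase_of_mem (F.min'_mem hne)]
        omega
      have hcard' : M ≤ F'.card := by
        rw [Finset.card_erase_of_mem (F.min'_mem hne)]
        omega
      obtain ⟨q', hq'F', hminle, hcard''⟩ := ih (by omega) F' hne' hcard'
      have hq'F : q' ∈ F := Finset.erase_subset a F hq'F'
      have haq : a < q' := by
        have h1 : a ≤ F'.min' hne' := F.min'_le _ (Finset.erase_subset a F (F'.min'_mem hne'))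
        have h2 : F'.min' hne' ≠ a := Finset.ne_of_mem_erase (F'.min'_mem hne')
        omega
      refine ⟨q', hq'F, F.min'_le q' hq'F, ?_⟩
      have hFi : F = insert a F' := (Finset.insert_erase (F.min'_mem hne)).symm
      rw [hFi, Finset.filter_insert, if_pos haq, Finset.card_insert_of_notMem
        (fun hmem => Finset.notMem_erase a F (Finset.filter_subset _ _ hmem))]
      simp only [← hF']
      omega

open scoped Classical in
lemma cnt_eq_subfilter {G : Set Arc} {P Q p' q' : ℤ} {F : Finset ℤ}
    (hF : F = (Finset.Ico P Q).filter (fun v => ∀ b ∈ G, ¬(b.2 ≤ v ∧ v ≤ b.1)))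
    (hp : p' ∈ F) (hq : q' ∈ F) (hmin : ∀ v ∈ F, p' ≤ v) :
    cnt G p' q' = (F.filter (fun v => v < q')).card := by
  unfold cnt
  congr 1
  ext v
  subst hF
  simp only [Finset.mem_filter, Finset.mem_Ico] at *
  constructor
  · rintro ⟨⟨h1, h2⟩, h3⟩
    exact ⟨⟨⟨by omega, by omega⟩, h3⟩, h2⟩
  · rintro ⟨⟨⟨h1, h2⟩, h3⟩, h4⟩
    exact ⟨⟨hmin v ⟨⟨h1, h2⟩, h3⟩, h4⟩, h3⟩

/-! ### no large isolated families -/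

lemma iso_bound {w : ℤ} (hw : w ≤ -1) {H : Set Arc} (hH : IsHomConfig w H)
    {G : Set Arc} {p' q' : ℤ} (hpq : p' < q') (hdvd : (1 - w) ∣ (q' - p' + 1))
    (hGlt : ∀ b ∈ G, b.2 < b.1)
    (hp : ∀ b ∈ G, ¬(b.2 ≤ p' ∧ p' ≤ b.1)) (hq : ∀ b ∈ G, ¬(b.2 ≤ q' ∧ q' ≤ b.1))
    (hout : ∀ b ∈ H, b ∉ G → (b.1 < p' ∨ q' < b.2) ∨ (b.2 < p' ∧ q' < b.1)) : False := by
  have hm : (0:ℤ) < 1 - w := by omega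
  have hlen : (1 - w) ≤ q' - p' + 1 := Int.le_of_dvd (by omega) hdvd
  have hz : Adm w (q', p') := by
    refine ⟨by simp; omega, by simp; omega, ?_⟩
    simpa using hdvd
  have hcomp : ∀ x ∈ H, x ≠ (q', p') → ¬Cross x (q', p') ∧ ¬ShareVertex x (q', p') := by
    intro x hx _
    have hxlt : x.2 < x.1 := (hH.1 x hx).1
    by_cases hxG : x ∈ G
    · have hxp := hp x hxG
      have hxq := hq x hxG
      constructor
      · rintro (⟨h1, h2, h3⟩ | ⟨h1, h2, h3⟩) <;> dsimp only at h1 h2 h3 <;> omega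
      · rintro (h | h | h | h) <;> dsimp only at h <;> omega
    · have h3 := hout x hx hxG
      constructor
      · rintro (⟨h1, h2, h3'⟩ | ⟨h1, h2, h3'⟩) <;> dsimp only at h1 h2 h3' <;> omega
      · rintro (h | h | h | h) <;> dsimp only at h <;> omega
  have hmem := haddable hw hH hz hcomp
  by_cases hzG : (q', p') ∈ G
  · exact hq _ hzG (by constructor <;> simp <;> omega)
  · rcases hout _ hmem hzG with (h | h) | h <;> dsimp only at h <;> omega

/-! ### the children family and exact top-isolated count -/

def chil (H : Set Arc) (x : Arc) : Set Arc := {b | b ∈ H ∧ x.2 < b.2 ∧ b.1 < x.1}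

lemma goodfam_H {w : ℤ} (hw : w ≤ -1) {H : Set Arc} (hH : IsHomConfig w H) : GoodFam w H :=
  ⟨fun b hb => (hH.1 b hb).1, fun b hb => (hH.1 b hb).2.2,
    fun b hb c hc hbc => hNC hw hH hb hc hbc⟩

lemma goodfam_chil {w : ℤ} (hw : w ≤ -1) {H : Set Arc} (hH : IsHomConfig w H) (x : Arc) :
    GoodFam w (chil H x) :=
  ⟨fun b hb => (hH.1 b hb.1).1, fun b hb => (hH.1 b hb.1).2.2,
    fun b hb c hc hbc => hNC hw hH hb.1 hc.1 hbc⟩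

/-- key bound + exact count: each arc has exactly `|w| - 1` top-level isolated vertices -/
lemma topiso {w : ℤ} (hw : w ≤ -1) {H : Set Arc} (hH : IsHomConfig w H)
    {x : Arc} (hx : x ∈ H) : (cnt (chil H x) (x.2 + 1) x.1 : ℤ) = -w - 1 := by
  classical
  have hm : (0:ℤ) < 1 - w := by omega
  obtain ⟨hx1, hx2, hx3⟩ := hH.1 x hx
  have hns1 : NotStrad (chil H x) (x.2 + 1) := by
    rintro b ⟨hbH, hb1, hb2⟩ ⟨h1, h2⟩; omega
  have hns2 : NotStrad (chil H x) x.1 := by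
    rintro b ⟨hbH, hb1, hb2⟩ ⟨h1, h2⟩; omega
  have hMC := MC hw (goodfam_chil hw hH x) (x.1 - x.2 - 1).toNat (x.2 + 1) x.1
    (by omega) (by omega) hns1 hns2
  set c := cnt (chil H x) (x.2 + 1) x.1 with hc
  have hd2 : (1 - w) ∣ ((c : ℤ) + 2) := by
    have := dvd_sub hx3 hMC
    have he : (x.1 - x.2 + 1) - (x.1 - (x.2+1) - (c:ℤ)) = (c:ℤ) + 2 := by ring
    rwa [he] at this
  have hge : -w - 1 ≤ (c : ℤ) := by
    have := Int.le_of_dvd (by omega : (0:ℤ) < (c:ℤ) + 2) hd2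
    omega
  have hcle : (c : ℤ) ≤ -w - 1 := by
    by_contra hgt
    push_neg at hgt
    -- then c + 2 ≥ m + 1 and m ∣ c + 2, so c ≥ 2m - 2 ≥ m
    have hbig : (1 - w) ≤ (c:ℤ) + 2 - (1 - w) := by
      refine Int.le_of_dvd (by omega) ?_
      exact dvd_sub hd2 ⟨1, by ring⟩
    set F := ((Finset.Ico (x.2 + 1) x.1).filter
      (fun v => ∀ b ∈ chil H x, ¬(b.2 ≤ v ∧ v ≤ b.1))) with hF
    have hFcard : F.card = c := rfl
    have hMle : (1 - w).toNat ≤ F.card := by omega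
    have hne : F.Nonempty := by
      rw [← Finset.card_pos]; omega
    obtain ⟨q', hq'F, hminle, hcard⟩ := extract (1 - w).toNat (by omega) F hne hMle
    set p' := F.min' hne with hp'
    have hp'F : p' ∈ F := F.min'_mem hne
    have hcnt' : cnt (chil H x) p' q' = ((1 - w).toNat) - 1 :=
      (cnt_eq_subfilter hF hp'F hq'F (fun v hv => F.min'_le v hv)).trans hcard
    have hpredp : ∀ b ∈ chil H x, ¬(b.2 ≤ p' ∧ p' ≤ b.1) := by
      have := hp'F; rw [hF, Finset.mem_filter] at this; exact this.2
    have hpredq : ∀ b ∈ chil H x, ¬(b.2 ≤ q' ∧ q' ≤ b.1) := by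
      have := hq'F; rw [hF, Finset.mem_filter] at this; exact this.2
    have hIcop : p' ∈ Finset.Ico (x.2+1) x.1 := by
      have := hp'F; rw [hF, Finset.mem_filter] at this; exact this.1
    have hIcoq : q' ∈ Finset.Ico (x.2+1) x.1 := by
      have := hq'F; rw [hF, Finset.mem_filter] at this; exact this.1
    rw [Finset.mem_Ico] at hIcop hIcoq
    have hplq : p' < q' := by
      have hpos : 0 < (F.filter (fun v => v < q')).card := by omega
      rw [Finset.card_pos] at hpos
      obtain ⟨v, hv⟩ := hpos
      rw [Finset.mem_filter] at hv
      have := F.min'_le v hv.1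
      omega
    have hMC2 := MC hw (goodfam_chil hw hH x) (q' - p').toNat p' q' (by omega) (by omega)
      (fun b hb h => hpredp b hb ⟨le_of_lt h.1, h.2⟩)
      (fun b hb h => hpredq b hb ⟨le_of_lt h.1, h.2⟩)
    rw [hcnt'] at hMC2
    have hcast : (((1 - w).toNat - 1 : ℕ) : ℤ) = -w := by
      have h1 : ((1 - w).toNat : ℤ) = 1 - w := Int.toNat_of_nonneg (by omega)
      have h2 : 1 ≤ (1 - w).toNat := by omega
      push_cast [Nat.cast_sub h2]
      omega
    rw [hcast] at hMC2
    have hdvd' : (1 - w) ∣ (q' - p' + 1) := by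
      have : q' - p' + 1 = (q' - p' - -w) + (1 - w) := by ring
      rw [this]
      exact dvd_add hMC2 ⟨1, by ring⟩
    refine iso_bound hw hH hplq hdvd' (fun b hb => (hH.1 b hb.1).1) hpredp hpredq ?_
    intro b hbH hbG
    by_cases hbx : b = x
    · subst hbx; right; omega
    · have hnch : ¬(x.2 < b.2 ∧ b.1 < x.1) := fun hcc => hbG ⟨hbH, hcc⟩
      obtain ⟨hnc, hns⟩ := hNC hw hH hbH hx hbx
      have hblt := (hH.1 b hbH).1
      unfold Cross at hnc
      unfold ShareVertex at hns
      push_neg at hnc hns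
      omega
  omega

/-! ### bound on isolated vertices with no overarc -/

lemma S_card_bound {w : ℤ} (hw : w ≤ -1) {H : Set Arc} (hH : IsHomConfig w H)
    (F : Finset ℤ) (hFS : ∀ v ∈ F, v ∈ NoOverarcIsolated H) : (F.card : ℤ) ≤ -w := by
  classical
  by_contra hbig
  push_neg at hbig
  have harcs : ∀ b ∈ H, b.2 < b.1 := fun b hb => (hH.1 b hb).1
  have hne : F.Nonempty := by
    rw [← Finset.card_pos]; omega
  set lo := F.min' hne with hlo
  set hi := F.max' hne with hhi
  have hSfin : (NoOverarcIsolated H ∩ Set.Icc lo hi).Finite :=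
    (Set.finite_Icc lo hi).subset Set.inter_subset_right
  set F2 := hSfin.toFinset with hF2
  have hFsub : F ⊆ F2 := by
    intro v hv
    rw [hF2, Set.Finite.mem_toFinset]
    exact ⟨hFS v hv, F.min'_le v hv, F.le_max' v hv⟩
  have hcard2 : (1 - w).toNat ≤ F2.card := by
    have := Finset.card_le_card hFsub
    omega
  have hne2 : F2.Nonempty := by
    rw [← Finset.card_pos]; omega
  obtain ⟨q', hq'F2, hminle, hcard⟩ := extract (1 - w).toNat (by omega) F2 hne2 hcard2
  set p' := F2.min' hne2 with hp'
  have hp'F2 : p' ∈ F2 := F2.min'_mem hne2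
  have hmemS : ∀ v ∈ F2, v ∈ NoOverarcIsolated H := by
    intro v hv
    rw [hF2, Set.Finite.mem_toFinset] at hv
    exact hv.1
  have hbnd : ∀ v ∈ F2, lo ≤ v ∧ v ≤ hi := by
    intro v hv
    rw [hF2, Set.Finite.mem_toFinset] at hv
    exact hv.2
  have hfilter : (Finset.Ico p' q').filter (fun v => ∀ b ∈ H, ¬(b.2 ≤ v ∧ v ≤ b.1))
      = F2.filter (fun v => v < q') := by
    ext v
    simp only [Finset.mem_filter, Finset.mem_Ico]
    constructor
    · rintro ⟨⟨h1, h2⟩, h3⟩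
      have hvS : v ∈ NoOverarcIsolated H := (mem_S_iff harcs).2 h3
      have : v ∈ F2 := by
        rw [hF2, Set.Finite.mem_toFinset]
        refine ⟨hvS, Set.mem_Icc.2 ⟨?_, ?_⟩⟩
        · have := (hbnd p' hp'F2).1; omega
        · have := (hbnd q' hq'F2).2; omega
      exact ⟨this, h2⟩
    · rintro ⟨h1, h2⟩
      exact ⟨⟨F2.min'_le v h1, h2⟩, (mem_S_iff harcs).1 (hmemS v h1)⟩
  have hcnt' : cnt H p' q' = (1 - w).toNat - 1 := by
    unfold cnt
    rw [hfilter, hcard]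
  have hplq : p' < q' := by
    have hpos : 0 < (F2.filter (fun v => v < q')).card := by
      have hM1 : 1 ≤ (1 - w).toNat - 1 := by omega
      omega
    rw [Finset.card_pos] at hpos
    obtain ⟨v, hv⟩ := hpos
    rw [Finset.mem_filter] at hv
    have := F2.min'_le v hv.1
    omega
  have hpredp : ∀ b ∈ H, ¬(b.2 ≤ p' ∧ p' ≤ b.1) := (mem_S_iff harcs).1 (hmemS p' hp'F2)
  have hpredq : ∀ b ∈ H, ¬(b.2 ≤ q' ∧ q' ≤ b.1) := (mem_S_iff harcs).1 (hmemS q' hq'F2)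
  have hMC2 := MC hw (goodfam_H hw hH) (q' - p').toNat p' q' (by omega) (by omega)
    (fun b hb h => hpredp b hb ⟨le_of_lt h.1, h.2⟩)
    (fun b hb h => hpredq b hb ⟨le_of_lt h.1, h.2⟩)
  rw [hcnt'] at hMC2
  have hcast : (((1 - w).toNat - 1 : ℕ) : ℤ) = -w := by
    have h1 : ((1 - w).toNat : ℤ) = 1 - w := Int.toNat_of_nonneg (by omega)
    have h2 : 1 ≤ (1 - w).toNat := by omega
    push_cast [Nat.cast_sub h2]
    omega
  rw [hcast] at hMC2
  have hdvd' : (1 - w) ∣ (q' - p' + 1) := by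
    have : q' - p' + 1 = (q' - p' - -w) + (1 - w) := by ring
    rw [this]
    exact dvd_add hMC2 ⟨1, by ring⟩
  exact iso_bound hw hH hplq hdvd' harcs hpredp hpredq (fun b hb hnb => absurd hb hnb)

lemma S_finite {w : ℤ} (hw : w ≤ -1) {H : Set Arc} (hH : IsHomConfig w H) :
    (NoOverarcIsolated H).Finite := by
  by_contra hinf
  obtain ⟨t, hts, htfin, htcard⟩ :=
    Set.Infinite.exists_subset_ncard_eq hinf ((1 - w).toNat)
  have := S_card_bound hw hH htfin.toFinset
    (fun v hv => hts (htfin.mem_toFinset.1 hv))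
  rw [← Set.ncard_eq_toFinset_card t htfin, htcard] at this
  have : ((1 - w).toNat : ℤ) = 1 - w := Int.toNat_of_nonneg (by omega)
  omega

lemma S_ncard_bound {w : ℤ} (hw : w ≤ -1) {H : Set Arc} (hH : IsHomConfig w H) :
    ((NoOverarcIsolated H).ncard : ℤ) ≤ -w := by
  have hfin := S_finite hw hH
  have := S_card_bound hw hH hfin.toFinset (fun v hv => hfin.mem_toFinset.1 hv)
  rwa [← Set.ncard_eq_toFinset_card _ hfin] at this

open scoped Classical in
lemma cnt_le_S {H : Set Arc} (harcs : ∀ b ∈ H, b.2 < b.1)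
    (hfin : (NoOverarcIsolated H).Finite) (p q : ℤ) :
    (cnt H p q : ℤ) ≤ (NoOverarcIsolated H).ncard := by
  unfold cnt
  rw [Set.ncard_eq_toFinset_card _ hfin]
  have hsub : (Finset.Ico p q).filter (fun v => ∀ b ∈ H, ¬(b.2 ≤ v ∧ v ≤ b.1))
      ⊆ hfin.toFinset := by
    intro v hv
    rw [Finset.mem_filter] at hv
    rw [Set.Finite.mem_toFinset]
    exact (mem_S_iff harcs).2 hv.2
  exact_mod_cast Finset.card_le_card hsub

/-! ### the main theorem -/

theorem main_thm {w : ℤ} (hw : w ≤ -1) {H : Set Arc} (hH : IsHomConfig w H) :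
    IsLeftRiedtmann w H ↔
      ((NoOverarcIsolated H).Finite ∧ ((NoOverarcIsolated H).ncard : ℤ) ≤ -w - 1) := by
  classical
  have hm : (0:ℤ) < 1 - w := by omega
  have harcs : ∀ b ∈ H, b.2 < b.1 := fun b hb => (hH.1 b hb).1
  have hfin := S_finite hw hH
  constructor
  · -- Riedtmann → at most |w| - 1 no-overarc isolated vertices
    intro hLR
    refine ⟨hfin, ?_⟩
    by_contra hbig
    push_neg at hbig
    have hub := S_ncard_bound hw hH
    set V := hfin.toFinset with hV
    have hVcard : (V.card : ℤ) = -w := by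
      rw [hV, ← Set.ncard_eq_toFinset_card _ hfin]
      omega
    have hne : V.Nonempty := by
      rw [← Finset.card_pos]
      omega
    set p := V.min' hne with hp
    set M' := V.max' hne with hM'
    have hpM : p ≤ M' := V.min'_le _ (V.max'_mem hne)
    have hpS : p ∈ NoOverarcIsolated H := hfin.mem_toFinset.1 (V.min'_mem hne)
    have hMS : M' ∈ NoOverarcIsolated H := hfin.mem_toFinset.1 (V.max'_mem hne)
    have hpP := (mem_S_iff harcs).1 hpS
    have hMP := (mem_S_iff harcs).1 hMS
    have hnsq : NotStrad H (M' + 1) := by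
      rintro b hb ⟨h1, h2⟩
      exact hMP b hb ⟨by omega, by omega⟩
    have hnsp : NotStrad H p := fun b hb h => hpP b hb ⟨le_of_lt h.1, h.2⟩
    have hcnt : cnt H p (M' + 1) = V.card := by
      unfold cnt
      congr 1
      ext v
      simp only [Finset.mem_filter, Finset.mem_Ico]
      constructor
      · rintro ⟨⟨h1, h2⟩, h3⟩
        exact hfin.mem_toFinset.2 ((mem_S_iff harcs).2 h3)
      · intro hv
        have hvS := hfin.mem_toFinset.1 hv
        exact ⟨⟨V.min'_le v hv, by have := V.le_max' v hv; omega⟩,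
          (mem_S_iff harcs).1 hvS⟩
    have hMC := MC hw (goodfam_H hw hH) (M' + 1 - p).toNat p (M' + 1)
      (by omega) (by omega) hnsp hnsq
    rw [hcnt] at hMC
    have hdvd : (1 - w) ∣ (M' + 1 - p + 1) := by
      have h1 : (M' + 1 - p - (V.card : ℤ)) = (M' + 1 - p + w) := by omega
      rw [h1] at hMC
      have h2 : M' + 1 - p + 1 = (M' + 1 - p + w) + (1 - w) := by ring
      rw [h2]
      exact dvd_add hMC ⟨1, by ring⟩
    have hzadm : Adm w (M' + 1, p) := by
      refine ⟨by dsimp only; omega, ?_, by simpa using hdvd⟩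
      have := Int.le_of_dvd (by omega) hdvd
      dsimp only
      omega
    obtain ⟨x, hx, i, hi1, hi0, hext⟩ := hLR.2.2 (M' + 1, p) hzadm
    obtain ⟨hk, hk1⟩ := kk_spec hw (hH.1 x hx)
    obtain ⟨n, hn0, hnk, h3, hbr⟩ := ext_cases hw (hH.1 x hx) (by omega) hi0 hext
    dsimp only at h3 hbr
    have hN0 : 0 ≤ n * (1 - w) := mul_nonneg hn0 (by omega)
    have hNk : n * (1 - w) ≤ (x.1 - x.2 + 1) - (1 - w) := by
      have h1 : n * (1 - w) ≤ (kk w x - 1) * (1 - w) :=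
        mul_le_mul_of_nonneg_right hnk (by omega)
      have h2 : (kk w x - 1) * (1 - w) = kk w x * (1 - w) - (1 - w) := by ring
      omega
    have hpPx := hpP x hx
    have hMPx := hMP x hx
    rcases hbr with hA | hB <;> omega
  · -- at most |w| - 1 no-overarc isolated vertices → Riedtmann
    rintro ⟨hfin', hS⟩
    refine ⟨hH.1, fun x hx y hy hxy i hi1 hi2 => hpair hH hx hy hxy hi1 hi2, ?_⟩
    intro z hz
    by_contra hno
    push_neg at hno
    have hnA : ∀ x ∈ H, ∀ n : ℤ, 0 ≤ n → n ≤ kk w x - 1 →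
        0 ≤ x.1 - z.1 - n * (1 - w) → x.1 - z.1 - n * (1 - w) ≤ -w - 1 →
        ¬(x.1 - x.2 - n * (1 - w) ≤ z.1 - z.2) := by
      intro x hx n h1 h2 h3 h4 h5
      obtain ⟨i, hi1, hi2, he⟩ := extA_cov hw (hH.1 x hx) hz n h1 h2 h3 h4 h5
      exact hno x hx i hi1 hi2 he
    have hnB : ∀ x ∈ H, ∀ n : ℤ, 0 ≤ n → n ≤ kk w x - 1 →
        1 ≤ z.2 - x.2 - n * (1 - w) → z.2 - x.2 - n * (1 - w) ≤ -w →
        ¬(x.1 - x.2 - n * (1 - w) ≤ z.1 - z.2) := by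
      intro x hx n h1 h2 h3 h4 h5
      obtain ⟨i, hi1, hi2, he⟩ := extB_cov hw (hH.1 x hx) hz n h1 h2 h3 h4 h5
      exact hno x hx i hi1 hi2 he
    obtain ⟨hz1, hz2, hz3⟩ := hz
    by_cases hc1 : ∃ b ∈ H, b.2 < z.1 ∧ z.1 ≤ b.1
    · -- CASE 1 : some arc straddles z.1 ; take a shortest one
      have hbdd : ∃ lb : ℤ, ∀ d : ℤ,
          (∃ b ∈ H, (b.2 < z.1 ∧ z.1 ≤ b.1) ∧ b.1 - b.2 = d) → lb ≤ d := by
        refine ⟨0, ?_⟩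
        rintro d ⟨b, hb, _, rfl⟩
        have := harcs b hb
        omega
      have hinh : ∃ d : ℤ, ∃ b ∈ H, (b.2 < z.1 ∧ z.1 ≤ b.1) ∧ b.1 - b.2 = d := by
        obtain ⟨b, hb, hs⟩ := hc1
        exact ⟨b.1 - b.2, b, hb, hs, rfl⟩
      obtain ⟨d₀, ⟨x, hx, hxstr, hxd⟩, hdmin⟩ := Int.exists_least_of_bdd hbdd hinh
      obtain ⟨hkx, hkx1⟩ := kk_spec hw (hH.1 x hx)
      have hxlt := harcs x hx
      have hnsz1 : NotStrad (chil H x) z.1 := by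
        rintro b ⟨hbH, hb1, hb2⟩ ⟨h1, h2⟩
        have := hdmin (b.1 - b.2) ⟨b, hbH, ⟨h1, h2⟩, rfl⟩
        omega
      have hnsu : NotStrad (chil H x) (x.2 + 1) := by
        rintro b ⟨hbH, hb1, hb2⟩ ⟨h1, h2⟩
        omega
      have hR1 := MC hw (goodfam_chil hw hH x) (z.1 - x.2 - 1).toNat (x.2 + 1) z.1
        (by omega) (by omega) hnsu hnsz1
      set c1 := cnt (chil H x) (x.2 + 1) z.1 with hc1def
      have htot := topiso hw hH hx
      have hsp := cnt_split (chil H x) (show x.2 + 1 ≤ z.1 by omega)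
        (show z.1 ≤ x.1 from hxstr.2)
      have he' := cnt_le' (chil H x) (show z.1 ≤ x.1 from hxstr.2)
      have hc1le : (c1 : ℤ) ≤ -w - 1 := by omega
      have hc1len := cnt_le' (chil H x) (show x.2 + 1 ≤ z.1 by omega)
      have hR1d := hR1
      obtain ⟨s, hs⟩ := hR1
      rw [mul_comm] at hs
      have hseq : z.1 - x.2 - 1 - (c1 : ℤ) = s * (1 - w) := by omega
      have hs0 : 0 ≤ s := fac_nonneg hm (by omega)
      have hprod1 : (kk w x - 1) * (1 - w) = x.1 - x.2 + 1 - (1 - w) := by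
        rw [sub_mul, one_mul, ← hkx]
      have hsk : s ≤ kk w x - 1 := by
        apply fac_le hm
        omega
      have hNval : (kk w x - 1 - s) * (1 - w)
          = (x.1 - x.2 + 1) - (1 - w) - (z.1 - x.2 - 1 - (c1 : ℤ)) := by
        have hexp : (kk w x - 1 - s) * (1 - w)
            = (kk w x - 1) * (1 - w) - s * (1 - w) := by ring
        rw [hexp, hprod1, ← hseq]
      have hA5 := hnA x hx (kk w x - 1 - s) (by omega) (by omega) (by omega) (by omega)
      push_neg at hA5
      -- z.1 - z.2 < -w - 1 + s * (1 - w) ; conclude x.2 ≤ z.2 - 2 - c1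
      have hX : (1 - w) ∣ (s * (1 - w) - (z.1 - z.2 + 1)) :=
        dvd_sub (dvd_mul_left (1 - w) s) hz3
      have hXge := dvd_big hm hX (by omega)
      have hu : x.2 ≤ z.2 - 2 - (c1 : ℤ) := by omega
      by_cases hc2 : ∃ b ∈ chil H x, b.2 < z.2 ∧ z.2 ≤ b.1
      · -- CASE 1b : a child straddles z.2 ; take a longest one
        have hbdd2 : ∃ ub : ℤ, ∀ d : ℤ,
            (∃ b ∈ chil H x, (b.2 < z.2 ∧ z.2 ≤ b.1) ∧ b.1 - b.2 = d) → d ≤ ub := by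
          refine ⟨x.1 - x.2, ?_⟩
          rintro d ⟨b, ⟨hbH, hb1, hb2⟩, _, rfl⟩
          omega
        have hinh2 : ∃ d : ℤ, ∃ b ∈ chil H x, (b.2 < z.2 ∧ z.2 ≤ b.1) ∧ b.1 - b.2 = d := by
          obtain ⟨b, hb, hs'⟩ := hc2
          exact ⟨b.1 - b.2, b, hb, hs', rfl⟩
        obtain ⟨dY, ⟨Y, hYchil, hYstr, hYd⟩, hdmax⟩ := Int.exists_greatest_of_bdd hbdd2 hinh2
        obtain ⟨hYH, hY1, hY2⟩ := hYchil
        have hYlt := harcs Y hYH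
        obtain ⟨hkY, hkY1⟩ := kk_spec hw (hH.1 Y hYH)
        have hYt : Y.1 < z.1 := by
          by_contra hcon
          exact hnsz1 Y ⟨hYH, hY1, hY2⟩ ⟨by omega, by omega⟩
        have hnsY2 : NotStrad (chil H x) Y.2 := by
          rintro b hbchil ⟨h1, h2⟩
          have hnest := nest hw hH hbchil.1 hYH (v := Y.2) (le_of_lt h1) h2 le_rfl
            (le_of_lt hYlt)
          rcases hnest with ⟨hh1, hh2⟩ | ⟨hh1, hh2⟩
          · have := hdmax (b.1 - b.2) ⟨b, hbchil, ⟨by omega, by omega⟩, rfl⟩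
            omega
          · omega
        have hR3 := MC hw (goodfam_chil hw hH x) (z.1 - Y.2).toNat Y.2 z.1
          (by omega) (by omega) hnsY2 hnsz1
        have h0 : cnt (chil H x) Y.2 (Y.1 + 1) = 0 :=
          cnt_zero_of_covered (chil H x) ⟨hYH, hY1, hY2⟩ le_rfl le_rfl
        have hsp2 := cnt_split (chil H x) (show Y.2 ≤ Y.1 + 1 by omega)
          (show Y.1 + 1 ≤ z.1 by omega)
        set e := cnt (chil H x) (Y.1 + 1) z.1 with hedef
        have hcY : cnt (chil H x) Y.2 z.1 = e := by omega
        rw [hcY] at hR3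
        have helen := cnt_le' (chil H x) (show Y.1 + 1 ≤ z.1 by omega)
        -- e ≤ -w - 1 via the total under x
        have hspa := cnt_split (chil H x) (show x.2 + 1 ≤ Y.1 + 1 by omega)
          (show Y.1 + 1 ≤ x.1 by omega)
        have hspb := cnt_split (chil H x) (show Y.1 + 1 ≤ z.1 by omega)
          (show z.1 ≤ x.1 from hxstr.2)
        have hele : (e : ℤ) ≤ -w - 1 := by omega
        -- divisibility bookkeeping
        have hzY : (1 - w) ∣ (z.2 - Y.2 - 1 - (e : ℤ)) := by
          have hco : z.2 - Y.2 - 1 - (e : ℤ)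
              = (z.1 - Y.2 - (e : ℤ)) - (z.1 - z.2 + 1) := by ring
          rw [hco]
          exact dvd_sub hR3 hz3
        have hzYc := hzY
        have hXge0 := dvd_big hm hzY (by omega)
        obtain ⟨s', hss'⟩ := hzY
        rw [mul_comm] at hss'
        have hs'0 : 0 ≤ s' := fac_nonneg hm (by omega)
        have hX2 : (1 - w) ∣ (Y.1 - z.2 + w + 1 + (e : ℤ)) := by
          have hco : Y.1 - z.2 + w + 1 + (e : ℤ)
              = (Y.1 - Y.2 + 1) - (z.2 - Y.2 - 1 - (e : ℤ)) - (1 - w) := by ring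
          rw [hco]
          exact dvd_sub (dvd_sub (hH.1 Y hYH).2.2 hzYc) ⟨1, by ring⟩
        have hX2ge := dvd_big hm hX2 (by omega)
        have hprodY : (kk w Y - 1) * (1 - w) = Y.1 - Y.2 + 1 - (1 - w) := by
          rw [sub_mul, one_mul, ← hkY]
        have hs'k : s' ≤ kk w Y - 1 := by
          apply fac_le hm
          omega
        exact hnB Y hYH s' hs'0 hs'k (by omega) (by omega) (by omega)
      · -- CASE 1a : no child straddles z.2
        push_neg at hc2
        have hnsz2 : NotStrad (chil H x) z.2 := by
          rintro b hb ⟨h1, h2⟩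
          have := hc2 b hb h1
          omega
        have hR2 := MC hw (goodfam_chil hw hH x) (z.2 - x.2 - 1).toNat (x.2 + 1) z.2
          (by omega) (by omega) hnsu hnsz2
        set c' := cnt (chil H x) (x.2 + 1) z.2 with hc'def
        have hsp2 := cnt_split (chil H x) (show x.2 + 1 ≤ z.2 by omega)
          (show z.2 ≤ z.1 by omega)
        have hcc : (c' : ℤ) ≤ (c1 : ℤ) := by omega
        have hcomb : (1 - w) ∣ ((c1 : ℤ) - (c' : ℤ) + 1) := by
          have hco : (c1 : ℤ) - (c' : ℤ) + 1
              = (z.2 - (x.2+1) - (c' : ℤ)) - (z.1 - (x.2+1) - (c1 : ℤ)) + (z.1 - z.2 + 1) := by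
            ring
          rw [hco]
          exact dvd_add (dvd_sub hR2 hR1d) hz3
        exact dvd_none hm hcomb (by omega) (by omega)
    · -- CASE 2 : no arc straddles z.1
      push_neg at hc1
      have hns1 : NotStrad H z.1 := by
        rintro b hb ⟨h1, h2⟩
        exact absurd h2 (by push_neg; exact hc1 b hb h1)
      by_cases hc2 : ∃ b ∈ H, b.2 < z.2 ∧ z.2 ≤ b.1
      · -- CASE 2a : an arc straddles z.2 ; take one with largest right endpoint
        have hbdd2 : ∃ ub : ℤ, ∀ d : ℤ,
            (∃ b ∈ H, (b.2 < z.2 ∧ z.2 ≤ b.1) ∧ b.1 = d) → d ≤ ub := by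
          refine ⟨z.1, ?_⟩
          rintro d ⟨b, hb, ⟨h1, h2⟩, rfl⟩
          have := hc1 b hb (by omega)
          omega
        have hinh2 : ∃ d : ℤ, ∃ b ∈ H, (b.2 < z.2 ∧ z.2 ≤ b.1) ∧ b.1 = d := by
          obtain ⟨b, hb, hs'⟩ := hc2
          exact ⟨b.1, b, hb, hs', rfl⟩
        obtain ⟨dY, ⟨Y, hYH, hYstr, hYd⟩, hdmax⟩ := Int.exists_greatest_of_bdd hbdd2 hinh2
        have hYlt := harcs Y hYH
        obtain ⟨hkY, hkY1⟩ := kk_spec hw (hH.1 Y hYH)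
        have hYt : Y.1 < z.1 := by
          have := hc1 Y hYH (by omega)
          omega
        have hnsY : NotStrad H (Y.1 + 1) := by
          rintro b hbH ⟨h1, h2⟩
          by_cases hb2 : b.2 < z.2
          · have := hdmax b.1 ⟨b, hbH, ⟨hb2, by omega⟩, rfl⟩
            omega
          · push_neg at hb2
            have hnest := nest hw hH hbH hYH (v := b.2) le_rfl (le_of_lt (harcs b hbH))
              (by omega) (by omega)
            rcases hnest with ⟨hh1, hh2⟩ | ⟨hh1, hh2⟩ <;> omega
        have hR3 := MC hw (goodfam_H hw hH) (z.1 - Y.1 - 1).toNat (Y.1 + 1) z.1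
          (by omega) (by omega) hnsY hns1
        set e := cnt H (Y.1 + 1) z.1 with hedef
        have helen := cnt_le' H (show Y.1 + 1 ≤ z.1 by omega)
        have hele : (e : ℤ) ≤ -w - 1 := le_trans (cnt_le_S harcs hfin' _ _) hS
        have hzY : (1 - w) ∣ (z.2 - Y.2 - 1 - (e : ℤ)) := by
          have hco : z.2 - Y.2 - 1 - (e : ℤ)
              = (z.1 - (Y.1 + 1) - (e : ℤ)) - (z.1 - z.2 + 1) + (Y.1 - Y.2 + 1) := by ring
          rw [hco]
          exact dvd_add (dvd_sub hR3 hz3) (hH.1 Y hYH).2.2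
        have hzYc := hzY
        have hXge0 := dvd_big hm hzY (by omega)
        obtain ⟨s', hss'⟩ := hzY
        rw [mul_comm] at hss'
        have hs'0 : 0 ≤ s' := fac_nonneg hm (by omega)
        have hX2 : (1 - w) ∣ (Y.1 - z.2 + w + 1 + (e : ℤ)) := by
          have hco : Y.1 - z.2 + w + 1 + (e : ℤ)
              = (Y.1 - Y.2 + 1) - (z.2 - Y.2 - 1 - (e : ℤ)) - (1 - w) := by ring
          rw [hco]
          exact dvd_sub (dvd_sub (hH.1 Y hYH).2.2 hzYc) ⟨1, by ring⟩
        have hX2ge := dvd_big hm hX2 (by omega)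
        have hprodY : (kk w Y - 1) * (1 - w) = Y.1 - Y.2 + 1 - (1 - w) := by
          rw [sub_mul, one_mul, ← hkY]
        have hs'k : s' ≤ kk w Y - 1 := by
          apply fac_le hm
          omega
        exact hnB Y hYH s' hs'0 hs'k (by omega) (by omega) (by omega)
      · -- CASE 2b : nothing straddles z.2 either
        push_neg at hc2
        have hns2 : NotStrad H z.2 := by
          rintro b hb ⟨h1, h2⟩
          exact absurd h2 (by push_neg; exact hc2 b hb h1)
        have hR := MC hw (goodfam_H hw hH) (z.1 - z.2).toNat z.2 z.1
          (by omega) (by omega) hns2 hns1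
        set c := cnt H z.2 z.1 with hcdef
        have hcle : (c : ℤ) ≤ -w - 1 := le_trans (cnt_le_S harcs hfin' _ _) hS
        have hcomb : (1 - w) ∣ ((c : ℤ) + 1) := by
          have hco : (c : ℤ) + 1 = (z.1 - z.2 + 1) - (z.1 - z.2 - (c : ℤ)) := by ring
          rw [hco]
          exact dvd_sub hz3 hR
        exact dvd_none hm hcomb (by omega) (by omega)

end Aux

/-- Theorem 4.3 ((1) ⇔ (3)): a `|w|`-Hom-configuration `H` is a left `|w|`-Riedtmann
configuration iff there are at most `|w| - 1` isolated vertices with no overarc. -/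
theorem stmt7 (w : ℤ) (hw : w ≤ -1) (H : Set Arc) (hH : IsHomConfig w H) :
    IsLeftRiedtmann w H ↔
      ((NoOverarcIsolated H).Finite ∧ ((NoOverarcIsolated H).ncard : ℤ) ≤ -w - 1) := by
  exact main_thm hw hH

end SphericalArcs
end

section
/- Let H be a |w|-Hom-configuration. Then H is a right |w|-Riedtmann configuration if and only if there are at most |w| − 1 isolated vertices with no overarc. -/
/- Combinatorial model of the triangulated category `T_w` generated by a `w`-spherical
object (`w ≤ -1`), via `d`-admissible arcs of the ∞-gon, where `d = w - 1`,
`|d| = 1 - w`, `|w| = -w`. -/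

namespace SphericalArcs

/-! ### arithmetic helpers -/

lemma dvd_nonneg_of_neg_lt {n T : ℤ} (hn : 0 < n) (h : n ∣ T) (h2 : -n < T) : 0 ≤ T := by
  rcases h with ⟨m, rfl⟩
  rcases le_or_gt 0 m with h' | h'
  · exact mul_nonneg hn.le h'
  · have hm : m ≤ -1 := by omega
    have := mul_le_mul_of_nonneg_left hm hn.le
    omega

lemma adm_shift_s8 {w : ℤ} (i : ℤ) {b : Arc} (hb : Adm w b) : Adm w (b.1 - i, b.2 - i) := by
  obtain ⟨h1, h2, h3⟩ := hb
  refine ⟨by omega, by omega, ?_⟩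
  have : b.1 - i - (b.2 - i) + 1 = b.1 - b.2 + 1 := by ring
  rw [this]; exact h3

lemma extNe_iff {w : ℤ} (hw : w ≤ -1) {a b : Arc} (ha : Adm w a) (hb : Adm w b) (i : ℤ) :
    ExtNe w i a b ↔
      ((∃ j : ℤ, 0 ≤ j ∧ (1-w)*(j+1) ≤ a.1 - a.2 + 1 ∧ b.1 - i = a.1 - j*(1-w) ∧ b.2 - i ≤ a.2) ∨
       (∃ j : ℤ, 0 ≤ j ∧ (1-w)*(j+1) ≤ a.1 - a.2 + 1 ∧ b.2 - i = a.2 + (1-w) - 1 + j*(1-w) ∧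
          a.1 + (1-w) - 1 ≤ b.1 - i)) := by
  have hN : (0:ℤ) < 1 - w := by omega
  have hj : ∀ j : ℤ, (j ≤ kk w a - 1 ↔ (1-w)*(j+1) ≤ a.1 - a.2 + 1) := by
    intro j
    unfold kk
    rw [show (1-w)*(j+1) = (j+1)*(1-w) by ring, ← Int.le_ediv_iff_mul_le hN]
    omega
  have hjS : ∀ j : ℤ, (j ≤ kk w (Serre w a) - 1 ↔ (1-w)*(j+1) ≤ a.1 - a.2 + 1) := by
    intro j
    have : kk w (Serre w a) = kk w a := by
      unfold kk Serre; simp only; ring_nf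
    rw [this]; exact hj j
  constructor
  · rintro (⟨_, ⟨j, hj0, hj1, hj2⟩, hj3⟩ | ⟨_, ⟨j, hj0, hj1, hj2⟩, hj3⟩)
    · have hr : j * (w - 1) = -(j * (1 - w)) := by ring
      exact Or.inl ⟨j, hj0, (hj j).mp hj1, by simp only at hj2 ⊢; omega, by simpa using hj3⟩
    · have hr : j * (w - 1) = -(j * (1 - w)) := by ring
      refine Or.inr ⟨j, hj0, (hjS j).mp hj1, ?_, ?_⟩
      · simp only [Serre] at hj2 ⊢; omega
      · simp only [Serre] at hj3 ⊢; omega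
  · rintro (⟨j, hj0, hj1, hj2, hj3⟩ | ⟨j, hj0, hj1, hj2, hj3⟩)
    · have hr : j * (w - 1) = -(j * (1 - w)) := by ring
      exact Or.inl ⟨adm_shift_s8 i hb, ⟨j, hj0, (hj j).mpr hj1, by simp only; omega⟩,
        by simpa using hj3⟩
    · have hr : j * (w - 1) = -(j * (1 - w)) := by ring
      refine Or.inr ⟨adm_shift_s8 i hb, ⟨j, hj0, (hjS j).mpr hj1, ?_⟩, ?_⟩
      · simp only [Serre]; omega
      · simp only [Serre]; omega

/-- `Hom(z,z) ≠ 0`. -/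
lemma homNe_self {w : ℤ} (hw : w ≤ -1) {z : Arc} (hz : Adm w z) : ExtNe w 0 z z := by
  refine (extNe_iff hw hz hz 0).mpr (Or.inl ⟨0, le_refl 0, ?_, by ring, by omega⟩)
  have := hz.2.1; omega

/-- no self-extensions in degrees `w+1 ≤ i ≤ -1`. -/
lemma selfExt_vanish {w : ℤ} (hw : w ≤ -1) {z : Arc} (hz : Adm w z) {i : ℤ}
    (hi1 : w + 1 ≤ i) (hi2 : i ≤ -1) : ¬ ExtNe w i z z := by
  intro h
  rcases (extNe_iff hw hz hz i).mp h with ⟨j, hj0, hj1, hj2, hj3⟩ | ⟨j, hj0, hj1, hj2, hj3⟩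
  · omega
  · have : 0 ≤ j * (1-w) := mul_nonneg hj0 (by omega)
    omega

/-- if `Ext^i(a,b) ≠ 0` for some `w ≤ i ≤ 0` then `a,b` cross or share a vertex. -/
lemma ext_imp_crossShare {w : ℤ} (hw : w ≤ -1) {a b : Arc} (ha : Adm w a) (hb : Adm w b)
    {i : ℤ} (hi1 : w ≤ i) (hi2 : i ≤ 0) (h : ExtNe w i a b) :
    Cross a b ∨ ShareVertex a b := by
  rcases (extNe_iff hw ha hb i).mp h with ⟨j, hj0, hj1, hj2, hj3⟩ | ⟨j, hj0, hj1, hj2, hj3⟩ <;>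
  · have h1 : 0 ≤ j * (1-w) := mul_nonneg hj0 (by omega)
    have h2 : (1-w)*(j+1) = j*(1-w) + (1-w) := by ring
    unfold Cross ShareVertex
    omega

/-- the crossing/sharing patterns characterizing `∃ i ∈ [w+1,0], Ext^i(z,x) ≠ 0`. -/
def Pat (w : ℤ) (x z : Arc) : Prop :=
  x = z ∨
  (x.2 < z.2 ∧ z.2 < x.1 ∧ x.1 < z.1 ∧ ¬ (1-w) ∣ (z.2 - x.2 + 1)) ∨
  (z.2 < x.2 ∧ x.2 < z.1 ∧ z.1 < x.1 ∧ ¬ (1-w) ∣ (x.2 - z.2)) ∨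
  x.2 = z.1 ∨
  (x.2 = z.2 ∧ x.1 < z.1) ∨
  (x.1 = z.1 ∧ x.2 < z.2)

lemma gp_imp_pat {w : ℤ} (hw : w ≤ -1) {z x : Arc} (hz : Adm w z) (hx : Adm w x)
    {i : ℤ} (hi1 : w + 1 ≤ i) (hi2 : i ≤ 0) (h : ExtNe w i z x) : Pat w x z := by
  obtain ⟨p, q⟩ := z
  obtain ⟨s, r⟩ := x
  obtain ⟨hz1, hz2, hz3⟩ := hz
  obtain ⟨hx1, hx2, hx3⟩ := hx
  simp only at hz1 hz2 hz3 hx1 hx2 hx3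
  unfold Pat
  simp only [Prod.mk.injEq]
  rcases (extNe_iff hw ⟨hz1, hz2, hz3⟩ ⟨hx1, hx2, hx3⟩ i).mp h with
    ⟨j, hj0, hj1, hj2, hj3⟩ | ⟨j, hj0, hj1, hj2, hj3⟩ <;>
    simp only at hj1 hj2 hj3 <;>
    have h1 : 0 ≤ j * (1-w) := mul_nonneg hj0 (by omega) <;>
    have h2 : (1-w)*(j+1) = j*(1-w) + (1-w) := by ring
  -- Fplus case : q < s ≤ p , r ≤ q
  · have hsp : s ≤ p := by omega
    have hqs : q < s := by omega
    have hrq : r ≤ q := by omega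
    rcases eq_or_lt_of_le hrq with hrq' | hrq'
    · -- r = q forces i = 0 and j*(1-w) = p - s
      have hi0 : i = 0 := by omega
      rcases eq_or_lt_of_le hsp with hsp' | hsp'
      · exact Or.inl ⟨hsp', hrq'⟩
      · right; right; right; right; left; exact ⟨hrq', hsp'⟩
    · rcases eq_or_lt_of_le hsp with hsp' | hsp'
      · right; right; right; right; right; exact ⟨hsp', hrq'⟩
      · -- strict cross on the left; derive the residue condition
        right; left
        refine ⟨hrq', hqs, hsp', fun hdvd => ?_⟩
        have key : (1-w) ∣ (i - 1) := by
          have hexp : i - 1 = (s - r + 1) - (p - q + 1) - (q - r + 1) + j*(1-w) := by omega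
          rw [hexp]
          exact dvd_add (dvd_sub (dvd_sub hx3 hz3) hdvd) (dvd_mul_left _ _)
        have := dvd_nonneg_of_neg_lt (by omega : (0:ℤ) < 1-w) key (by omega)
        omega
  -- Fminus case : q < r ≤ p < s
  · have hqr : q < r := by omega
    have hrp : r ≤ p := by omega
    have hps : p < s := by omega
    rcases eq_or_lt_of_le hrp with hrp' | hrp'
    · right; right; right; left; exact hrp'
    · right; right; left
      refine ⟨hqr, hrp', hps, fun hdvd => ?_⟩
      have key : (1-w) ∣ (i - 1) := by
        have hexp : i - 1 = (r - q) - (1-w)*(j+1) := by omega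
        rw [hexp]
        exact dvd_sub hdvd (dvd_mul_right _ _)
      have := dvd_nonneg_of_neg_lt (by omega : (0:ℤ) < 1-w) key (by omega)
      omega

lemma nonneg_factor {w j : ℤ} (hw : w ≤ -1) (h : 0 ≤ (1-w)*j) : 0 ≤ j := by
  by_contra h'
  have hj : j ≤ -1 := by omega
  have := mul_le_mul_of_nonneg_left hj (by omega : (0:ℤ) ≤ 1-w)
  omega

lemma pat_imp_gp {w : ℤ} (hw : w ≤ -1) {z x : Arc} (hz : Adm w z) (hx : Adm w x)
    (h : Pat w x z) : ∃ i : ℤ, w + 1 ≤ i ∧ i ≤ 0 ∧ ExtNe w i z x := by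
  have hN : (0:ℤ) < 1 - w := by omega
  obtain ⟨hz1, hz2, hz3⟩ := hz
  obtain ⟨hx1, hx2, hx3⟩ := hx
  set p := z.1 with hp
  set q := z.2 with hq
  set s := x.1 with hs
  set r := x.2 with hr
  have hzadm : Adm w z := ⟨hz1, hz2, hz3⟩
  have hxadm : Adm w x := ⟨hx1, hx2, hx3⟩
  rcases h with heq | ⟨c1, c2, c3, c4⟩ | ⟨c1, c2, c3, c4⟩ | hc | ⟨c1, c2⟩ | ⟨c1, c2⟩
  · subst heq
    exact ⟨0, by omega, le_refl 0, homNe_self hw hzadm⟩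
  · -- F1 cross : r < q < s < p , ¬ N ∣ q - r + 1 ; use Fplus
    set e := (q - r) % (1-w) with hedef
    have he0 : 0 ≤ e := Int.emod_nonneg _ (by omega)
    have he1 : e < 1-w := Int.emod_lt_of_pos _ hN
    set D := (q - r) / (1-w) with hDdef
    have hD : (1-w) * D + e = q - r := Int.mul_ediv_add_emod _ _
    have hD0 : 0 ≤ D := Int.ediv_nonneg (by omega) (by omega)
    have heN : e ≠ 1 - w - 1 := by
      intro hcon
      exact c4 ⟨D + 1, by rw [mul_add]; omega⟩
    obtain ⟨m1, hm1⟩ := hz3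
    obtain ⟨m2, hm2⟩ := hx3
    refine ⟨-e, by omega, by omega, ?_⟩
    rw [extNe_iff hw hzadm hxadm]
    refine Or.inl ⟨m1 - m2 + D, ?_, ?_, ?_, ?_⟩
    · -- 0 ≤ j
      have hjj : (1-w)*(m1 - m2 + D) = p - s - e := by
        have : (1-w)*(m1 - m2 + D) = (1-w)*m1 - (1-w)*m2 + (1-w)*D := by ring
        omega
      exact nonneg_factor hw
        (dvd_nonneg_of_neg_lt hN (dvd_mul_right (1-w) (m1 - m2 + D)) (by omega))
    · -- (1-w)*(j+1) ≤ p - q + 1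
      have hjj : (1-w)*(m1 - m2 + D + 1) = p - s - e + (1-w) := by
        have : (1-w)*(m1 - m2 + D + 1) = (1-w)*m1 - (1-w)*m2 + (1-w)*D + (1-w) := by ring
        omega
      have hT : (1-w) ∣ (p - q + 1) - ((1-w)*(m1 - m2 + D + 1)) :=
        dvd_sub ⟨m1, hm1⟩ (dvd_mul_right _ _)
      have := dvd_nonneg_of_neg_lt hN hT (by omega)
      omega
    · -- s - i = p - j*(1-w)
      have hjj : (m1 - m2 + D) * (1-w) = p - s - e := by
        have : (m1 - m2 + D)*(1-w) = (1-w)*m1 - (1-w)*m2 + (1-w)*D := by ring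
        omega
      omega
    · -- r - i ≤ q
      have : 0 ≤ (1-w)*D := mul_nonneg (by omega) hD0
      omega
  · -- F2 cross : q < r < p < s , ¬ N ∣ r - q ; use Fminus
    set e := (r - q + 1) % (1-w) with hedef
    have he0 : 0 ≤ e := Int.emod_nonneg _ (by omega)
    have he1 : e < 1-w := Int.emod_lt_of_pos _ hN
    set D := (r - q + 1) / (1-w) with hDdef
    have hD : (1-w) * D + e = r - q + 1 := Int.mul_ediv_add_emod _ _
    have heN : e ≠ 1 := by
      intro hcon
      exact c4 ⟨D, by omega⟩
    -- choose i ；either e = 0 (i = 0) or 2 ≤ e (i = e - (1-w))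
    rcases eq_or_ne e 0 with he | he
    · -- i = 0 , j = D - 1
      have hD1 : 1 ≤ D := by
        have : 0 < (1-w)*D := by omega
        nlinarith
      refine ⟨0, by omega, le_refl 0, ?_⟩
      rw [extNe_iff hw hzadm hxadm]
      refine Or.inr ⟨D - 1, by omega, ?_, ?_, ?_⟩
      · -- (1-w)*D ≤ p - q + 1
        have hexp : (1-w)*(D - 1 + 1) = (1-w)*D := by ring
        have hT : (1-w) ∣ (p - q + 1) - (1-w)*D := dvd_sub hz3 (dvd_mul_right _ _)
        have := dvd_nonneg_of_neg_lt hN hT (by omega)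
        omega
      · have : (D-1)*(1-w) = (1-w)*D - (1-w) := by ring
        omega
      · -- s - 0 ≥ p + (1-w) - 1
        have hU : (1-w) ∣ (s - 0 - (p + (1-w) - 1)) := by
          have hexp : s - 0 - (p + (1-w) - 1) = (s - r + 1) + (r - q + 1) - (p - q + 1) - (1-w) := by
            omega
          rw [hexp]
          exact dvd_sub (dvd_sub (dvd_add hx3 ⟨D, by omega⟩) hz3) (dvd_refl _)
        have := dvd_nonneg_of_neg_lt hN hU (by omega)
        omega
    · have he2 : 2 ≤ e := by omega
      refine ⟨e - (1-w), by omega, by omega, ?_⟩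
      rw [extNe_iff hw hzadm hxadm]
      have hD0 : 0 ≤ D := Int.ediv_nonneg (by omega) (by omega)
      refine Or.inr ⟨D, hD0, ?_, ?_, ?_⟩
      · -- (1-w)*(D+1) ≤ p - q + 1 ⟺ p - r + i ≥ 0
        have hT : (1-w) ∣ (p - q + 1) - (1-w)*(D + 1) := dvd_sub hz3 (dvd_mul_right _ _)
        have hexp : (1-w)*(D+1) = (1-w)*D + (1-w) := by ring
        have := dvd_nonneg_of_neg_lt hN hT (by omega)
        omega
      · have : D*(1-w) = (1-w)*D := by ring
        omega
      · -- p + (1-w) - 1 ≤ s - i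
        have hU : (1-w) ∣ (s - (e - (1-w)) - (p + (1-w) - 1)) := by
          have hexp : s - (e - (1-w)) - (p + (1-w) - 1) =
              (s - r + 1) + ((1-w)*D) - (p - q + 1) := by omega
          rw [hexp]
          exact dvd_sub (dvd_add hx3 (dvd_mul_right _ _)) hz3
        have := dvd_nonneg_of_neg_lt hN hU (by omega)
        omega
  · -- r = p : use Fminus with i = 0 , j = m1 - 1
    obtain ⟨m1, hm1⟩ := hz3
    have hm1' : 1 ≤ m1 := by nlinarith
    refine ⟨0, by omega, le_refl 0, ?_⟩
    rw [extNe_iff hw hzadm hxadm]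
    refine Or.inr ⟨m1 - 1, by omega, ?_, ?_, ?_⟩
    · have : (1-w)*(m1 - 1 + 1) = (1-w)*m1 := by ring
      omega
    · have : (m1 - 1)*(1-w) = (1-w)*m1 - (1-w) := by ring
      omega
    · omega
  · -- r = q ∧ s < p : use Fplus with i = 0
    obtain ⟨m1, hm1⟩ := hz3
    obtain ⟨m2, hm2⟩ := hx3
    refine ⟨0, by omega, le_refl 0, ?_⟩
    rw [extNe_iff hw hzadm hxadm]
    refine Or.inl ⟨m1 - m2, ?_, ?_, ?_, by omega⟩
    · refine nonneg_factor hw ?_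
      have : (1-w)*(m1 - m2) = (1-w)*m1 - (1-w)*m2 := by ring
      omega
    · have : (1-w)*(m1 - m2 + 1) = (1-w)*m1 - (1-w)*m2 + (1-w) := by ring
      omega
    · have : (m1 - m2)*(1-w) = (1-w)*m1 - (1-w)*m2 := by ring
      omega
  · -- s = p ∧ r < q : Fplus with i = 0 , j = 0
    refine ⟨0, by omega, le_refl 0, ?_⟩
    rw [extNe_iff hw hzadm hxadm]
    exact Or.inl ⟨0, le_refl 0, by omega, by omega, by omega⟩

/-! ### traversal machinery -/

def Good (R : Set Arc) (v : ℤ) : Prop := ∀ x ∈ R, ¬ (x.2 ≤ v ∧ v < x.1)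

def Hole (R : Set Arc) (v : ℤ) : Prop := ∀ x ∈ R, x.1 ≠ v ∧ x.2 ≠ v ∧ ¬ (x.2 < v ∧ v < x.1)

lemma Hole.good {R : Set Arc} {v : ℤ} (h : Hole R v) : Good R v := by
  intro x hx hc
  have := h x hx
  omega

/-- The traversal lemma: scanning `(v₀, b]` from a good vertex `v₀`, the number of
holes is `≡ b - v₀ (mod 1-w)`, provided arcs overshooting `b` start at suitable
residues. -/
lemma traversal {w : ℤ} (hw : w ≤ -1) (R : Set Arc)
    (hadm : ∀ x ∈ R, x.2 < x.1 ∧ (1-w) ∣ (x.1 - x.2 + 1))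
    (hpair : ∀ x ∈ R, ∀ y ∈ R, x ≠ y → ¬ Cross x y ∧ ¬ ShareVertex x y)
    (b : ℤ) :
    ∀ (n : ℕ) (v₀ : ℤ), b - v₀ = n → Good R v₀ →
      (∀ y ∈ R, v₀ < y.2 → y.2 ≤ b → b < y.1 → (1-w) ∣ (b - y.2 + 1)) →
      ∃ S : Finset ℤ, (∀ m : ℤ, m ∈ S ↔ (Hole R m ∧ v₀ < m ∧ m ≤ b)) ∧
        (1-w) ∣ (b - v₀ - S.card) := by
  intro n
  induction n using Nat.strong_induction_on with
  | _ n ih =>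
    intro v₀ hn hgood hover
    rcases eq_or_lt_of_le (show v₀ ≤ b by omega) with hvb | hvb
    · refine ⟨∅, fun m => by simp; omega, ?_⟩
      have hz : b - v₀ - ((∅ : Finset ℤ).card : ℤ) = 0 := by simp; omega
      rw [hz]
      exact dvd_zero _
    by_cases hh : Hole R (v₀ + 1)
    · -- step to the hole v₀ + 1
      have hgood' : Good R (v₀ + 1) := by
        intro x hx hc
        have h1 := hh x hx
        exact hgood x hx (by omega)
      obtain ⟨S', hS1, hS2⟩ := ih (b - (v₀+1)).toNat (by omega) (v₀ + 1) (by omega) hgood'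
        (fun y hy h1 h2 h3 => hover y hy (by omega) h2 h3)
      have hnot : v₀ + 1 ∉ S' := fun hc => by have := (hS1 _).mp hc; omega
      refine ⟨insert (v₀+1) S', fun m => ?_, ?_⟩
      · rw [Finset.mem_insert, hS1]
        constructor
        · rintro (rfl | ⟨h1, h2, h3⟩)
          · exact ⟨hh, by omega, by omega⟩
          · exact ⟨h1, by omega, h3⟩
        · rintro ⟨h1, h2, h3⟩
          rcases eq_or_lt_of_le (show v₀ + 1 ≤ m by omega) with h4 | h4
          · exact Or.inl h4.symm
          · exact Or.inr ⟨h1, h4, h3⟩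
      · rw [Finset.card_insert_of_notMem hnot]
        push_cast
        have : b - v₀ - (S'.card + 1) = b - (v₀+1) - S'.card := by ring
        rw [this]
        exact hS2
    · -- v₀ + 1 is an endpoint: find the arc with bottom v₀ + 1
      obtain ⟨y, hy, hy2⟩ : ∃ y ∈ R, y.2 = v₀ + 1 := by
        unfold Hole at hh
        push_neg at hh
        obtain ⟨x, hx, hc⟩ := hh
        have hax := hadm x hx
        have hgx := hgood x hx
        by_cases h1 : x.2 = v₀ + 1
        · exact ⟨x, hx, h1⟩
        · exfalso; apply hgx; omega
      have hay := hadm y hy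
      have hcover : ∀ m : ℤ, v₀ < m → m ≤ y.1 → ¬ Hole R m := by
        intro m h1 h2 hc
        have := hc y hy
        omega
      rcases le_or_gt y.1 b with hyb | hyb
      · -- jump to y.1
        have hgood' : Good R y.1 := by
          intro x hx hc
          have hax := hadm x hx
          have hne : x ≠ y := by intro h; rw [h] at hc; omega
          have hcs := hpair x hx y hy hne
          have hgx := hgood x hx
          unfold Cross ShareVertex at hcs
          push_neg at hcs
          -- x.2 ≤ y.1 < x.1 leads to contradiction
          rcases le_or_gt x.2 v₀ with h1 | h1
          · exact hgx ⟨h1, by omega⟩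
          · omega
        obtain ⟨S', hS1, hS2⟩ := ih (b - y.1).toNat (by omega) y.1 (by omega) hgood'
          (fun y' hy' h1 h2 h3 => hover y' hy' (by omega) h2 h3)
        refine ⟨S', fun m => ?_, ?_⟩
        · rw [hS1]
          constructor
          · rintro ⟨h1, h2, h3⟩; exact ⟨h1, by omega, h3⟩
          · rintro ⟨h1, h2, h3⟩
            rcases le_or_gt m y.1 with h4 | h4
            · exact absurd h1 (hcover m h2 h4)
            · exact ⟨h1, h4, h3⟩
        · have hdvd : (1-w) ∣ (y.1 - v₀) := by
            have : y.1 - v₀ = y.1 - y.2 + 1 := by omega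
            rw [this]; exact hay.2
          have : b - v₀ - S'.card = (b - y.1 - S'.card) + (y.1 - v₀) := by ring
          rw [this]
          exact dvd_add hS2 hdvd
      · -- overshoot
        have hdvd := hover y hy (by omega) (by omega) hyb
        refine ⟨∅, fun m => ?_, ?_⟩
        · simp only [Finset.notMem_empty, false_iff]
          rintro ⟨h1, h2, h3⟩
          exact hcover m h2 (by omega) h1
        · simp only [Finset.card_empty, Nat.cast_zero, sub_zero]
          have : b - v₀ = b - y.2 + 1 := by omega
          rw [this]; exact hdvd

/-! ### Hom-configuration structure -/

lemma hole_iff_noi {H : Set Arc} {v : ℤ} : Hole H v ↔ v ∈ NoOverarcIsolated H := by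
  constructor
  · intro h
    exact ⟨fun a ha => ⟨(h a ha).1, (h a ha).2.1⟩, fun a ⟨ha, h1, h2⟩ => (h a ha).2.2 ⟨h1, h2⟩⟩
  · rintro ⟨h1, h2⟩ a ha
    exact ⟨(h1 a ha).1, (h1 a ha).2, fun hc => h2 a ⟨ha, hc.1, hc.2⟩⟩

lemma crossShare_imp_ext {w : ℤ} (hw : w ≤ -1) {x y : Arc} (hx : Adm w x) (hy : Adm w y)
    (hne : x ≠ y) (h : Cross x y ∨ ShareVertex x y) :
    (∃ i : ℤ, w + 1 ≤ i ∧ i ≤ 0 ∧ ExtNe w i x y) ∨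
    (∃ i : ℤ, w + 1 ≤ i ∧ i ≤ 0 ∧ ExtNe w i y x) := by
  have hone : ∀ A : ℤ, (1-w) ∣ (A + 1) → (1-w) ∣ A → False := by
    intro A h1 h2
    have h3 := dvd_sub h1 h2
    rw [show A + 1 - A = 1 by ring] at h3
    have := Int.le_of_dvd one_pos h3
    omega
  rcases h with (⟨c1, c2, c3⟩ | ⟨c1, c2, c3⟩) | (hc | hc | hc | hc)
  · -- x.2 < y.2 < x.1 < y.1
    by_cases hd : (1-w) ∣ (y.2 - x.2 + 1)
    · -- then ¬ (1-w) ∣ (y.2 - x.2) : Pat w y x , pattern 3 → Ext( x , y )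
      refine Or.inl (pat_imp_gp hw hx hy (Or.inr (Or.inr (Or.inl ⟨c1, c2, c3, ?_⟩))))
      intro hd2
      exact hone _ hd hd2
    · exact Or.inr (pat_imp_gp hw hy hx (Or.inr (Or.inl ⟨c1, c2, c3, hd⟩)))
  · -- y.2 < x.2 < y.1 < x.1 : symmetric
    by_cases hd : (1-w) ∣ (x.2 - y.2 + 1)
    · refine Or.inr (pat_imp_gp hw hy hx (Or.inr (Or.inr (Or.inl ⟨c1, c2, c3, ?_⟩))))
      intro hd2
      exact hone _ hd hd2
    · exact Or.inl (pat_imp_gp hw hx hy (Or.inr (Or.inl ⟨c1, c2, c3, hd⟩)))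
  · -- x.1 = y.1
    rcases lt_trichotomy x.2 y.2 with h2 | h2 | h2
    · exact Or.inr (pat_imp_gp hw hy hx
        (Or.inr (Or.inr (Or.inr (Or.inr (Or.inr ⟨hc, h2⟩))))))
    · exact absurd (Prod.ext hc h2) hne
    · exact Or.inl (pat_imp_gp hw hx hy
        (Or.inr (Or.inr (Or.inr (Or.inr (Or.inr ⟨hc.symm, h2⟩))))))
  · -- x.1 = y.2 : Pat w y x pattern 4 gives Ext( x , y )
    exact Or.inl (pat_imp_gp hw hx hy (Or.inr (Or.inr (Or.inr (Or.inl hc.symm)))))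
  · -- x.2 = y.1
    exact Or.inr (pat_imp_gp hw hy hx (Or.inr (Or.inr (Or.inr (Or.inl hc)))))
  · -- x.2 = y.2
    rcases lt_trichotomy x.1 y.1 with h2 | h2 | h2
    · exact Or.inr (pat_imp_gp hw hy hx
        (Or.inr (Or.inr (Or.inr (Or.inr (Or.inl ⟨hc, h2⟩))))))
    · exact absurd (Prod.ext h2 hc) hne
    · exact Or.inl (pat_imp_gp hw hx hy
        (Or.inr (Or.inr (Or.inr (Or.inr (Or.inl ⟨hc.symm, h2⟩))))))

lemma homconfig_pairwise {w : ℤ} (hw : w ≤ -1) {H : Set Arc} (hH : IsHomConfig w H) :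
    ∀ x ∈ H, ∀ y ∈ H, x ≠ y → ∀ i : ℤ, w ≤ i → i ≤ 0 → ¬ ExtNe w i x y := by
  intro x hx y hy hxy i hi1 hi2 hext
  have h2 := (hH.2 y (hH.1 y hy)).mp hy
  by_cases h0 : i = 0
  · exact (h2.2 x hx hxy).1 (h0 ▸ hext)
  · by_cases hwi : i = w
    · exact (h2.2 x hx hxy).2 (hwi ▸ hext)
    · exact h2.1 x hx i (by omega) (by omega) hext

lemma homconfig_noncross {w : ℤ} (hw : w ≤ -1) {H : Set Arc} (hH : IsHomConfig w H) :
    ∀ x ∈ H, ∀ y ∈ H, x ≠ y → ¬ Cross x y ∧ ¬ ShareVertex x y := by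
  intro x hx y hy hxy
  have key : ¬ (Cross x y ∨ ShareVertex x y) := by
    intro hc
    rcases crossShare_imp_ext hw (hH.1 x hx) (hH.1 y hy) hxy hc with ⟨i, h1, h2, h3⟩ | ⟨i, h1, h2, h3⟩
    · exact homconfig_pairwise hw hH x hx y hy hxy i (by omega) h2 h3
    · exact homconfig_pairwise hw hH y hy x hx (Ne.symm hxy) i (by omega) h2 h3
  tauto

lemma homconfig_maximal {w : ℤ} (hw : w ≤ -1) {H : Set Arc} (hH : IsHomConfig w H)
    {z : Arc} (hz : Adm w z)
    (hnc : ∀ x ∈ H, x ≠ z → ¬ Cross x z ∧ ¬ ShareVertex x z) : z ∈ H := by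
  apply (hH.2 z hz).mpr
  have key : ∀ x ∈ H, x ≠ z → ∀ i : ℤ, w ≤ i → i ≤ 0 → ¬ ExtNe w i x z := by
    intro x hx hxz i h1 h2 hext
    have := ext_imp_crossShare hw (hH.1 x hx) hz h1 h2 hext
    have h3 := hnc x hx hxz
    tauto
  refine ⟨fun x hx i h1 h2 hext => ?_, fun x hx hxz =>
    ⟨key x hx hxz 0 (by omega) (by omega), key x hx hxz w (by omega) (by omega)⟩⟩
  by_cases hxz : x = z
  · exact selfExt_vanish hw hz h1 h2 (hxz ▸ hext)
  · exact key x hx hxz i (by omega) (by omega) hext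

/-! ### sorted chains of holes -/

lemma dvd_lb {N c r : ℤ} (hN : 0 < N) (h : N ∣ c - r) (h0 : 0 ≤ c) (hr : 0 < r)
    (hrN : r < N) : r ≤ c := by
  by_contra h'
  push_neg at h'
  have h2 : N ∣ r - c := by
    have : r - c = -(c - r) := by ring
    rw [this]; exact dvd_neg.mpr h
  have := Int.le_of_dvd (by omega) h2
  omega

section chain

variable {w : ℤ} (hw : w ≤ -1) (R : Set Arc)
  (hadm : ∀ x ∈ R, x.2 < x.1 ∧ (1-w) ∣ (x.1 - x.2 + 1))
  (hpair : ∀ x ∈ R, ∀ y ∈ R, x ≠ y → ¬ Cross x y ∧ ¬ ShareVertex x y)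
  (S : Finset ℤ) (hhole : ∀ m ∈ S, Hole R m)
  (hsat : ∀ m₁ ∈ S, ∀ m₂ ∈ S, ∀ m : ℤ, m₁ < m → m < m₂ → Hole R m → m ∈ S)
  {k : ℕ} (hk : S.card = k)

lemma chain_mono {i j : Fin k} (hij : i < j) :
    (S.orderIsoOfFin hk i : ℤ) < (S.orderIsoOfFin hk j : ℤ) := by
  exact_mod_cast (S.orderIsoOfFin hk).lt_iff_lt.mpr hij

include hw hadm hpair hhole hsat in
lemma chain_consec {i j : Fin k} (hij : (j : ℕ) = (i : ℕ) + 1) :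
    (1-w) ∣ ((S.orderIsoOfFin hk j : ℤ) - (S.orderIsoOfFin hk i : ℤ) - 1) := by
  set vi : ℤ := (S.orderIsoOfFin hk i : ℤ) with hvi
  set vj : ℤ := (S.orderIsoOfFin hk j : ℤ) with hvj
  have hvij : vi < vj := chain_mono S hk (by exact Fin.lt_def.mpr (by omega))
  have hmi : vi ∈ S := (S.orderIsoOfFin hk i).2
  have hmj : vj ∈ S := (S.orderIsoOfFin hk j).2
  have hHi : Hole R vi := hhole _ hmi
  have hHj : Hole R vj := hhole _ hmj
  have hnob : ∀ m : ℤ, vi < m → m < vj → ¬ Hole R m := by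
    intro m h1 h2 hHm
    have hmS := hsat vi hmi vj hmj m h1 h2 hHm
    -- m would have an index strictly between i and j
    set l := (S.orderIsoOfFin hk).symm ⟨m, hmS⟩ with hl
    have hml : (S.orderIsoOfFin hk l : ℤ) = m := by
      rw [hl]; simp
    have h3 : i < l := by
      by_contra hc
      push_neg at hc
      have := (S.orderIsoOfFin hk).le_iff_le.mpr hc
      have : (S.orderIsoOfFin hk l : ℤ) ≤ vi := by exact_mod_cast this
      omega
    have h4 : l < j := by
      by_contra hc
      push_neg at hc
      have := (S.orderIsoOfFin hk).le_iff_le.mpr hc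
      have : vj ≤ (S.orderIsoOfFin hk l : ℤ) := by exact_mod_cast this
      omega
    omega
  have hover : ∀ y ∈ R, vi < y.2 → y.2 ≤ vj → vj < y.1 → (1-w) ∣ (vj - y.2 + 1) := by
    intro y hy h1 h2 h3
    exfalso
    have := hHj y hy
    omega
  obtain ⟨S', hS1, hS2⟩ := traversal hw R hadm hpair vj (vj - vi).toNat vi (by omega)
    hHi.good hover
  have hS' : S' = {vj} := by
    apply Finset.ext
    intro m
    rw [hS1, Finset.mem_singleton]
    constructor
    · rintro ⟨h1, h2, h3⟩
      rcases eq_or_lt_of_le h3 with h4 | h4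
      · exact h4
      · exact absurd h1 (hnob m h2 h4)
    · rintro rfl
      exact ⟨hHj, hvij, le_refl _⟩
  rw [hS'] at hS2
  simpa using hS2

include hw hadm hpair hhole hsat in
lemma chain_dvd : ∀ (l : ℕ) (i j : Fin k), (j : ℕ) = (i : ℕ) + l →
    (1-w) ∣ ((S.orderIsoOfFin hk j : ℤ) - (S.orderIsoOfFin hk i : ℤ) - l) := by
  intro l
  induction l with
  | zero =>
    intro i j hij
    have : i = j := Fin.ext (by omega)
    subst this
    simp
  | succ m ih =>
    intro i j hij
    have hm : (i : ℕ) + m < k := by omega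
    set j' : Fin k := ⟨(i : ℕ) + m, hm⟩ with hj'
    have h1 := ih i j' rfl
    have h2 := chain_consec hw R hadm hpair S hhole hsat hk (i := j') (j := j) (by simp [hj']; omega)
    have := dvd_add h1 h2
    have hexp : (S.orderIsoOfFin hk j' : ℤ) - (S.orderIsoOfFin hk i : ℤ) - m +
        ((S.orderIsoOfFin hk j : ℤ) - (S.orderIsoOfFin hk j' : ℤ) - 1) =
        (S.orderIsoOfFin hk j : ℤ) - (S.orderIsoOfFin hk i : ℤ) - (m+1 : ℕ) := by
      push_cast; ring
    rw [hexp] at this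
    exact this

end chain

/-! ### Direction 1 : many isolated vertices ⇒ not right Riedtmann -/

lemma dir1 {w : ℤ} (hw : w ≤ -1) {H : Set Arc} (hH : IsHomConfig w H)
    (hbig : ¬((NoOverarcIsolated H).Finite ∧ ((NoOverarcIsolated H).ncard : ℤ) ≤ -w - 1)) :
    ¬ IsRightRiedtmann w H := by
  have hadm' : ∀ x ∈ H, x.2 < x.1 ∧ (1-w) ∣ (x.1 - x.2 + 1) :=
    fun x hx => ⟨(hH.1 x hx).1, (hH.1 x hx).2.2⟩
  have hpair := homconfig_noncross hw hH
  set n : ℕ := (-w).toNat with hn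
  have hn1 : 1 ≤ n := by omega
  have hnZ : (n : ℤ) = -w := by omega
  -- extract n elements of the no-overarc-isolated set
  obtain ⟨T, hT1, hT2⟩ : ∃ T : Finset ℤ, ↑T ⊆ NoOverarcIsolated H ∧ T.card = n := by
    by_cases hfin : (NoOverarcIsolated H).Finite
    · have hcard : ¬ ((NoOverarcIsolated H).ncard : ℤ) ≤ -w - 1 := fun hc => hbig ⟨hfin, hc⟩
      have hle : n ≤ hfin.toFinset.card := by
        rw [← Set.ncard_eq_toFinset_card _ hfin]
        omega
      obtain ⟨T, hT1, hT2⟩ := Finset.exists_subset_card_eq hle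
      exact ⟨T, by intro t ht; exact hfin.mem_toFinset.mp (hT1 ht), hT2⟩
    · exact Set.Infinite.exists_subset_card_eq hfin n
  have hTne : T.Nonempty := Finset.card_pos.mp (by omega)
  set aT := T.min' hTne with haT
  set bT := T.max' hTne with hbT
  have haV : aT ∈ NoOverarcIsolated H := hT1 (T.min'_mem hTne)
  have hbV : bT ∈ NoOverarcIsolated H := hT1 (T.max'_mem hTne)
  have hab : aT ≤ bT := T.min'_le _ (T.max'_mem hTne)
  -- holes of H are exactly NoOverarcIsolated
  obtain ⟨S, hS1, _⟩ := traversal hw H hadm' hpair bT (bT - aT).toNat aT (by omega)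
    (hole_iff_noi.mpr haV).good
    (fun y hy h1 h2 h3 => by
      exfalso
      have := (hole_iff_noi.mpr hbV) y hy
      omega)
  set U := insert aT S with hU
  have hUhole : ∀ m ∈ U, Hole H m := by
    intro m hm
    rcases Finset.mem_insert.mp hm with rfl | hm'
    · exact hole_iff_noi.mpr haV
    · exact ((hS1 m).mp hm').1
  have hUle : ∀ m ∈ U, aT ≤ m ∧ m ≤ bT := by
    intro m hm
    rcases Finset.mem_insert.mp hm with rfl | hm'
    · exact ⟨le_refl _, hab⟩
    · have := (hS1 m).mp hm'
      omega
  have hUsat : ∀ m₁ ∈ U, ∀ m₂ ∈ U, ∀ m : ℤ, m₁ < m → m < m₂ → Hole H m → m ∈ U := by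
    intro m₁ hm₁ m₂ hm₂ m h1 h2 hm
    have l1 := hUle m₁ hm₁
    have l2 := hUle m₂ hm₂
    exact Finset.mem_insert.mpr (Or.inr ((hS1 m).mpr ⟨hm, by omega, by omega⟩))
  have hTU : T ⊆ U := by
    intro t ht
    rcases eq_or_lt_of_le (T.min'_le t ht) with h1 | h1
    · exact Finset.mem_insert.mpr (Or.inl h1.symm)
    · exact Finset.mem_insert.mpr (Or.inr ((hS1 t).mpr
        ⟨hole_iff_noi.mpr (hT1 ht), h1, T.le_max' t ht⟩))
  have hkn : n ≤ U.card := hT2 ▸ Finset.card_le_card hTU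
  set k := U.card with hk
  set v : Fin k → ℤ := fun i => (U.orderIsoOfFin rfl i : ℤ) with hv
  have hi0 : (0:ℕ) < k := by omega
  have hil : n - 1 < k := by omega
  set i0 : Fin k := ⟨0, hi0⟩ with hi0d
  set il : Fin k := ⟨n-1, hil⟩ with hild
  have hchain := chain_dvd hw H hadm' hpair U hUhole hUsat rfl (n-1) i0 il (by simp [hild, hi0d])
  set v0 := v i0 with hv0
  set vl := v il with hvl
  have hHv0 : Hole H v0 := hUhole _ (U.orderIsoOfFin rfl i0).2
  have hHvl : Hole H vl := hUhole _ (U.orderIsoOfFin rfl il).2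
  have hv0l : v0 ≤ vl := by
    rcases eq_or_lt_of_le (show (i0:ℕ) ≤ (il:ℕ) by simp [hi0d, hild]) with h | h
    · have : i0 = il := Fin.ext h
      rw [hv0, hvl, this]
    · exact le_of_lt (chain_mono U rfl (Fin.lt_def.mpr h))
  have hcast : ((n - 1 : ℕ) : ℤ) = -w - 1 := by omega
  have hD : (1-w) ∣ (vl - v0 - (-w - 1)) := by
    rw [← hcast]
    exact hchain
  -- now forget the enumeration : we only need the four facts
  clear_value v0 vl
  clear hchain hcast hv hvl hv0 hi0d hild hS1 hU hUhole hUle hUsat hTU hkn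
  -- the candidate arc
  obtain ⟨q0, hq0d⟩ : ∃ t : ℤ, t = v0 - 1 := ⟨_, rfl⟩
  have hadmA : Adm w (vl, q0) := by
    have hdvd : (1-w) ∣ (vl - q0 + 1) := by
      have : vl - q0 + 1 = (vl - v0 - (-w-1)) + (1-w) := by omega
      rw [this]; exact dvd_add hD (dvd_refl _)
    have := Int.le_of_dvd (by omega) hdvd
    refine ⟨?_, ?_, ?_⟩
    · show q0 < vl
      omega
    · show -w ≤ vl - q0
      omega
    · show (1-w) ∣ (vl - q0 + 1)
      exact hdvd
  by_cases hq0 : Hole H q0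
  · -- (v_l , q0) can be added to H : contradiction , so anything follows
    exfalso
    have hmax : ∀ x ∈ H, x ≠ (vl, q0) → ¬ Cross x (vl, q0) ∧ ¬ ShareVertex x (vl, q0) := by
      intro x hx _
      have h1 := hq0 x hx
      have h2 := hHvl x hx
      unfold Cross ShareVertex
      simp only
      omega
    have hAH := homconfig_maximal hw hH hadmA hmax
    exact (hHvl _ hAH).1 rfl
  · -- q0 is the top of some arc of H ; (v_l , q0) is weakly free
    have hytop : ∃ y ∈ H, y.1 = q0 := by
      unfold Hole at hq0
      push_neg at hq0
      obtain ⟨x, hx, hc⟩ := hq0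
      refine ⟨x, hx, ?_⟩
      have hax := hH.1 x hx
      have h0 := hHv0 x hx
      by_contra h1
      by_cases h2 : x.2 = q0
      · have h3 : -w ≤ x.1 - x.2 := hax.2.1
        omega
      · have h3 := hc h1 h2
        omega
    obtain ⟨y, hy, hy1⟩ := hytop
    intro hR
    obtain ⟨x, hx, i, h1, h2, hext⟩ := hR.2.2 (vl, q0) hadmA
    have hpat := gp_imp_pat hw hadmA (hH.1 x hx) h1 h2 hext
    have hxv0 := hHv0 x hx
    have hxvl := hHvl x hx
    have hxadm := hH.1 x hx
    have e1 : ((vl, q0) : Arc).1 = vl := rfl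
    have e2 : ((vl, q0) : Arc).2 = q0 := rfl
    obtain ⟨d1, d2, d3⟩ := hxv0
    obtain ⟨f1, f2, f3⟩ := hxvl
    rcases hpat with heq | ⟨c1, c2, c3, c4⟩ | ⟨c1, c2, c3, c4⟩ | hc | ⟨c1, c2⟩ | ⟨c1, c2⟩
    · rw [heq] at hx
      exact (hHvl _ hx).1 rfl
    · rw [e1] at c3; rw [e2] at c1 c2
      omega
    · rw [e1] at c2 c3; rw [e2] at c1
      omega
    · rw [e1] at hc
      omega
    · -- x.2 = q0 = y.1 : forbidden share
      rw [e2] at c1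
      by_cases hxy : x = y
      · have hyadm : y.2 < y.1 := (hH.1 y hy).1
        rw [hxy] at c1
        omega
      · exact (hpair x hx y hy hxy).2 (Or.inr (Or.inr (Or.inl (by omega))))
    · rw [e1] at c1
      omega

/-! ### Direction 2 main counting step -/

/-- Counting holes in `(q , p]` for a weakly free admissible pair `(p,q)`. -/
lemma traversal_to_p {w : ℤ} (hw : w ≤ -1) (R : Set Arc)
    (hadm : ∀ x ∈ R, x.2 < x.1 ∧ (1-w) ∣ (x.1 - x.2 + 1))
    (hpair : ∀ x ∈ R, ∀ y ∈ R, x ≠ y → ¬ Cross x y ∧ ¬ ShareVertex x y)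
    (p q : ℤ) (hpq : q < p) (hdvdpq : (1-w) ∣ (p - q + 1))
    (hnotop : ∀ x ∈ R, x.2 < q → q < x.1 → x.1 < p)
    (hqnobot : ∀ x ∈ R, x.2 ≠ q)
    (hF1 : ∀ x ∈ R, x.2 < q → q < x.1 → x.1 < p → (1-w) ∣ (q - x.2 + 1))
    (hF2 : ∀ x ∈ R, q < x.2 → x.2 < p → p < x.1 → (1-w) ∣ (x.2 - q))
    (hF3 : ∀ x ∈ R, x.2 ≠ p) :
    ∃ S : Finset ℤ, (∀ m : ℤ, m ∈ S ↔ (Hole R m ∧ q < m ∧ m ≤ p)) ∧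
      (1-w) ∣ (p - q - S.card) := by
  classical
  -- choose the starting point v₀
  obtain ⟨v₀, hv₀q, hv₀p, hv₀dvd, hv₀good, hv₀noh⟩ :
      ∃ v₀ : ℤ, q ≤ v₀ ∧ v₀ ≤ p ∧ (1-w) ∣ (v₀ - q) ∧ Good R v₀ ∧
        (∀ m : ℤ, q < m → m ≤ v₀ → ¬ Hole R m) := by
    by_cases hcov : ∃ x ∈ R, x.2 < q ∧ q < x.1
    · obtain ⟨t₀, ⟨y₀, hy₀, hy₀2, hy₀q, hy₀t⟩, hmax⟩ :=
        Int.exists_greatest_of_bdd (P := fun t => ∃ x ∈ R, x.2 < q ∧ q < x.1 ∧ x.1 = t)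
          ⟨p, fun t ⟨x, hx, h1, h2, h3⟩ => le_of_lt (h3 ▸ hnotop x hx h1 h2)⟩
          (by obtain ⟨x, hx, h1, h2⟩ := hcov; exact ⟨x.1, x, hx, h1, h2, rfl⟩)
      have hty : t₀ = y₀.1 := hy₀t.symm
      have ht₀p : t₀ < p := hty ▸ hnotop y₀ hy₀ hy₀2 hy₀q
      refine ⟨t₀, by omega, by omega, ?_, ?_, ?_⟩
      · have h1 := hF1 y₀ hy₀ hy₀2 hy₀q (by omega)
        have h2 := (hadm y₀ hy₀).2
        have : t₀ - q = (y₀.1 - y₀.2 + 1) - (q - y₀.2 + 1) := by omega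
        rw [this]; exact dvd_sub h2 h1
      · intro x hx hc
        have hxy : x ≠ y₀ := by
          intro h
          rw [h] at hc
          omega
        have hcs := hpair x hx y₀ hy₀ hxy
        unfold Cross ShareVertex at hcs
        push_neg at hcs
        rcases lt_trichotomy x.2 y₀.2 with h1 | h1 | h1
        · -- x also covers q , with bigger top : contradicts maximality
          have : x.1 ≤ t₀ := hmax x.1 ⟨x, hx, by omega, by omega, rfl⟩
          omega
        · exact hcs.2.2.2.2 h1
        · -- share or cross with y₀
          rcases eq_or_lt_of_le (show x.2 ≤ y₀.1 by omega) with h2 | h2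
          · exact hcs.2.2.2.1 h2
          · have := hcs.1.2 h1 h2
            omega
      · intro m h1 h2 hm
        have := hm y₀ hy₀
        omega
    · push_neg at hcov
      refine ⟨q, le_refl q, by omega, by simp, ?_, by omega⟩
      intro x hx hc
      rcases eq_or_lt_of_le (show x.2 ≤ q by omega) with h1 | h1
      · exact hqnobot x hx h1
      · exact absurd (by omega : q < x.1) (by simpa using hcov x hx h1)
  obtain ⟨S, hS1, hS2⟩ := traversal hw R hadm hpair p (p - v₀).toNat v₀ (by omega) hv₀good
    (fun y hy h1 h2 h3 => by
      rcases eq_or_lt_of_le h2 with h4 | h4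
      · exact absurd h4 (hF3 y hy)
      · have := hF2 y hy (by omega) h4 h3
        have hexp : p - y.2 + 1 = (p - q + 1) - (y.2 - q) := by ring
        rw [hexp]; exact dvd_sub hdvdpq this)
  refine ⟨S, fun m => ?_, ?_⟩
  · rw [hS1]
    constructor
    · rintro ⟨h1, h2, h3⟩; exact ⟨h1, by omega, h3⟩
    · rintro ⟨h1, h2, h3⟩
      rcases le_or_gt m v₀ with h4 | h4
      · exact absurd h1 (hv₀noh m h2 h4)
      · exact ⟨h1, h4, h3⟩
  · have : p - q - S.card = (p - v₀ - S.card) + (v₀ - q) := by ring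
    rw [this]
    exact dvd_add hS2 hv₀dvd

lemma dir2 {w : ℤ} (hw : w ≤ -1) {H : Set Arc} (hH : IsHomConfig w H)
    (hfin : (NoOverarcIsolated H).Finite)
    (hcard : ((NoOverarcIsolated H).ncard : ℤ) ≤ -w - 1)
    {z : Arc} (hz : Adm w z)
    (hfree : ∀ x ∈ H, ∀ i : ℤ, w + 1 ≤ i → i ≤ 0 → ¬ ExtNe w i z x) : False := by
  classical
  have hadm' : ∀ x ∈ H, x.2 < x.1 ∧ (1-w) ∣ (x.1 - x.2 + 1) :=
    fun x hx => ⟨(hH.1 x hx).1, (hH.1 x hx).2.2⟩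
  have hpair := homconfig_noncross hw hH
  have hznH : z ∉ H := fun hzH => hfree z hzH 0 (by omega) (le_refl 0) (homNe_self hw hz)
  have hnp : ∀ x ∈ H, ¬ Pat w x z := by
    intro x hx hp
    obtain ⟨i, h1, h2, hext⟩ := pat_imp_gp hw hz (hH.1 x hx) hp
    exact hfree x hx i h1 h2 hext
  obtain ⟨p, hp⟩ : ∃ t : ℤ, z.1 = t := ⟨_, rfl⟩
  obtain ⟨q, hq⟩ : ∃ t : ℤ, z.2 = t := ⟨_, rfl⟩
  have hqp : q < p := by have := hz.1; omega
  have hdvdpq : (1-w) ∣ (p - q + 1) := by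
    have := hz.2.2
    rw [hp, hq] at this
    exact this
  have hxnez : ∀ x ∈ H, x ≠ z := fun x hx hc => hznH (hc ▸ hx)
  have hnepq : ∀ x ∈ H, ¬ (x.2 = q ∧ x.1 = p) := by
    rintro x hx ⟨h1, h2⟩
    exact hxnez x hx (Prod.ext_iff.mpr ⟨by omega, by omega⟩)
  have hF1 : ∀ x ∈ H, x.2 < q → q < x.1 → x.1 < p → (1-w) ∣ (q - x.2 + 1) := by
    intro x hx h1 h2 h3
    by_contra hd
    exact hnp x hx (Or.inr (Or.inl ⟨by omega, by omega, by omega, by rw [hq]; exact hd⟩))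
  have hF2 : ∀ x ∈ H, q < x.2 → x.2 < p → p < x.1 → (1-w) ∣ (x.2 - q) := by
    intro x hx h1 h2 h3
    by_contra hd
    exact hnp x hx (Or.inr (Or.inr (Or.inl ⟨by omega, by omega, by omega, by rw [hq]; exact hd⟩)))
  have hF3 : ∀ x ∈ H, x.2 ≠ p := by
    intro x hx hc
    exact hnp x hx (Or.inr (Or.inr (Or.inr (Or.inl (by omega)))))
  have hF5 : ∀ x ∈ H, ¬(x.2 = q ∧ x.1 < p) := by
    rintro x hx ⟨h1, h2⟩
    exact hnp x hx (Or.inr (Or.inr (Or.inr (Or.inr (Or.inl ⟨by omega, by omega⟩)))))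
  have hF6 : ∀ x ∈ H, ¬(x.1 = p ∧ x.2 < q) := by
    rintro x hx ⟨h1, h2⟩
    exact hnp x hx (Or.inr (Or.inr (Or.inr (Or.inr (Or.inr ⟨by omega, by omega⟩)))))
  by_cases hDs : ∃ x ∈ H, x.2 ≤ q ∧ p ≤ x.1
  · -- CASE A : some arc of `H` contains `z`
    obtain ⟨t0, ⟨xs, hxs, hxs2, hxsp, hxs1⟩, hleast⟩ :=
      Int.exists_least_of_bdd (P := fun t => ∃ x ∈ H, x.2 ≤ q ∧ p ≤ x.1 ∧ x.1 = t)
        ⟨p, fun t ⟨x, hx, h1, h2, h3⟩ => h3 ▸ h2⟩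
        (by obtain ⟨x, hx, h1, h2⟩ := hDs; exact ⟨x.1, x, hx, h1, h2, rfl⟩)
    obtain ⟨u0, hu0⟩ : ∃ t : ℤ, xs.2 = t := ⟨_, rfl⟩
    have hu0q : u0 ≤ q := by omega
    have htp : p < t0 := by
      rcases eq_or_lt_of_le (show p ≤ t0 by omega) with h | h
      · exfalso
        rcases eq_or_lt_of_le hxs2 with h1 | h1
        · exact hnepq xs hxs ⟨by omega, by omega⟩
        · exact hF6 xs hxs ⟨by omega, by omega⟩
      · exact h
    set R : Set Arc := {x | x ∈ H ∧ ¬(x.2 ≤ q ∧ p ≤ x.1)} with hR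
    have hmemR : ∀ x : Arc, x ∈ R ↔ (x ∈ H ∧ ¬(x.2 ≤ q ∧ p ≤ x.1)) := fun x => Iff.rfl
    have hadmR : ∀ x ∈ R, x.2 < x.1 ∧ (1-w) ∣ (x.1 - x.2 + 1) := fun x hx => hadm' x hx.1
    have hpairR : ∀ x ∈ R, ∀ y ∈ R, x ≠ y → ¬ Cross x y ∧ ¬ ShareVertex x y :=
      fun x hx y hy => hpair x hx.1 y hy.1
    have hxsR : xs ∉ R := fun hc => hc.2 ⟨by omega, by omega⟩
    have hmin : ∀ y ∈ H, y.2 ≤ q → p ≤ y.1 → (y.2 ≤ u0 ∧ t0 ≤ y.1) := by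
      intro y hy h1 h2
      have h3 : t0 ≤ y.1 := hleast y.1 ⟨y, hy, h1, h2, rfl⟩
      refine ⟨?_, h3⟩
      by_cases hyx : y = xs
      · rw [hyx]; omega
      · by_contra h4
        push_neg at h4
        have hcs := hpair y hy xs hxs hyx
        unfold Cross ShareVertex at hcs
        push_neg at hcs
        have h5 := hcs.1.2 (by omega) (by omega)
        exact hcs.2.1 (by omega)
    -- traversal to p inside x*
    obtain ⟨SI, hSI1, hSI2⟩ := traversal_to_p hw R hadmR hpairR p q hqp hdvdpq
      (fun x hx h1 h2 => by
        by_contra h3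
        push_neg at h3
        rcases eq_or_lt_of_le h3 with h4 | h4
        · exact hF6 x hx.1 ⟨h4.symm, h1⟩
        · exact hx.2 ⟨by omega, by omega⟩)
      (fun x hx hc => by
        by_cases h1 : x.1 < p
        · exact hF5 x hx.1 ⟨hc, h1⟩
        · exact hx.2 ⟨by omega, by omega⟩)
      (fun x hx h1 h2 h3 => hF1 x hx.1 h1 h2 h3)
      (fun x hx h1 h2 h3 => hF2 x hx.1 h1 h2 h3)
      (fun x hx => hF3 x hx.1)
    -- traversal over the whole interior of x*
    have hgoodu0 : Good R u0 := by
      intro x hx hc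
      have hxxs : x ≠ xs := fun h => hxsR (h ▸ hx)
      have hcs := hpair x hx.1 xs hxs hxxs
      unfold Cross ShareVertex at hcs
      push_neg at hcs
      rcases lt_trichotomy x.2 u0 with h1 | h1 | h1
      · rcases lt_trichotomy x.1 t0 with h2 | h2 | h2
        · have := hcs.1.1 (by omega) (by omega)
          omega
        · exact hcs.2.1 (by omega)
        · exact hx.2 ⟨by omega, by omega⟩
      · exact hcs.2.2.2.2 (by omega)
      · omega
    obtain ⟨SA, hSA1, hSA2⟩ := traversal hw R hadmR hpairR (t0 - 1) (t0 - 1 - u0).toNat u0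
      (by omega) hgoodu0
      (fun y hy h1 h2 h3 => by
        exfalso
        have hyxs : y ≠ xs := fun h => hxsR (h ▸ hy)
        have hcs := hpair y hy.1 xs hxs hyxs
        unfold Cross ShareVertex at hcs
        push_neg at hcs
        rcases eq_or_lt_of_le (show t0 ≤ y.1 by omega) with h4 | h4
        · exact hcs.2.1 (by omega)
        · have := hcs.1.2 (by omega) (by omega)
          omega)
    have hsub : SI ⊆ SA := by
      intro m hm
      have h1 := (hSI1 m).mp hm
      exact (hSA1 m).mpr ⟨h1.1, by omega, by omega⟩
    have hcle : SI.card ≤ SA.card := Finset.card_le_card hsub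
    have hdI : (1-w) ∣ ((SI.card : ℤ) - (-w)) := by
      have hexp : (SI.card : ℤ) - (-w) = (p - q + 1) - (p - q - SI.card) - (1-w) := by ring
      rw [hexp]
      exact dvd_sub (dvd_sub hdvdpq hSI2) (dvd_refl _)
    have hcI : -w ≤ (SI.card : ℤ) :=
      dvd_lb (by omega) hdI (by positivity) (by omega) (by omega)
    have hdxs : (1-w) ∣ (t0 - u0 + 1) := by
      have hh := (hadm' xs hxs).2
      rw [hxs1, hu0] at hh
      exact hh
    have hne : (SI.card : ℤ) ≠ (SA.card : ℤ) := by
      intro he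
      have hexp : (1:ℤ) = (t0 - u0 + 1) - (p - q + 1) - ((t0 - 1 - u0) - (SA.card:ℤ)) +
          (p - q - (SI.card:ℤ)) := by omega
      have hdd : (1-w) ∣ ((t0 - u0 + 1) - (p - q + 1) - ((t0 - 1 - u0) - (SA.card:ℤ)) +
          (p - q - (SI.card:ℤ))) := dvd_add (dvd_sub (dvd_sub hdxs hdvdpq) hSA2) hSI2
      rw [← hexp] at hdd
      have := Int.le_of_dvd one_pos hdd
      omega
    have hcA : 1 - w ≤ (SA.card : ℤ) := by
      have : (SI.card : ℕ) ≤ SA.card := hcle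
      omega
    -- enumerate S_all and pick holes number 1 and 1 - w
    have hi0k : 0 < SA.card := by omega
    have hiNk : (-w).toNat < SA.card := by omega
    have hhole : ∀ m ∈ SA, Hole R m := fun m hm => ((hSA1 m).mp hm).1
    have hsat : ∀ m₁ ∈ SA, ∀ m₂ ∈ SA, ∀ m : ℤ, m₁ < m → m < m₂ → Hole R m → m ∈ SA := by
      intro m₁ hm₁ m₂ hm₂ m h1 h2 hm
      have l1 := (hSA1 m₁).mp hm₁
      have l2 := (hSA1 m₂).mp hm₂
      exact (hSA1 m).mpr ⟨hm, by omega, by omega⟩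
    have hchain := chain_dvd hw R hadmR hpairR SA hhole hsat rfl (-w).toNat
      ⟨0, hi0k⟩ ⟨(-w).toNat, hiNk⟩ (by simp)
    have hmono := chain_mono SA rfl (i := ⟨0, hi0k⟩) (j := ⟨(-w).toNat, hiNk⟩)
      (Fin.lt_def.mpr (by simp; omega))
    have hpack : ∃ h0 hN : ℤ, Hole R h0 ∧ Hole R hN ∧ u0 < h0 ∧ hN ≤ t0 - 1 ∧ h0 < hN ∧
        (1-w) ∣ (hN - h0 + w) := by
      refine ⟨_, _, hhole _ (SA.orderIsoOfFin rfl ⟨0, hi0k⟩).2,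
        hhole _ (SA.orderIsoOfFin rfl ⟨(-w).toNat, hiNk⟩).2,
        ((hSA1 _).mp (SA.orderIsoOfFin rfl ⟨0, hi0k⟩).2).2.1,
        ((hSA1 _).mp (SA.orderIsoOfFin rfl ⟨(-w).toNat, hiNk⟩).2).2.2, hmono, ?_⟩
      have hcast : (((-w).toNat : ℕ) : ℤ) = -w := by omega
      rw [hcast] at hchain
      have hexp : (SA.orderIsoOfFin rfl ⟨(-w).toNat, hiNk⟩ : ℤ) -
          (SA.orderIsoOfFin rfl ⟨0, hi0k⟩ : ℤ) + w =
          (SA.orderIsoOfFin rfl ⟨(-w).toNat, hiNk⟩ : ℤ) -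
          (SA.orderIsoOfFin rfl ⟨0, hi0k⟩ : ℤ) - -w := by ring
      rw [hexp]
      exact hchain
    obtain ⟨h0, hN, G1, G2, G3, G4, G5, G6⟩ := hpack
    have hadmA : Adm w (hN, h0) := by
      have hdvd : (1-w) ∣ (hN - h0 + 1) := by
        have hexp : hN - h0 + 1 = (hN - h0 + w) + (1-w) := by ring
        rw [hexp]
        exact dvd_add G6 (dvd_refl _)
      have := Int.le_of_dvd (by omega) hdvd
      refine ⟨?_, ?_, ?_⟩
      · show h0 < hN
        omega
      · show -w ≤ hN - h0
        omega
      · show (1-w) ∣ (hN - h0 + 1)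
        exact hdvd
    have hmax : ∀ x ∈ H, x ≠ (hN, h0) → ¬ Cross x (hN, h0) ∧ ¬ ShareVertex x (hN, h0) := by
      intro x hx _
      have eA1 : ((hN, h0) : Arc).1 = hN := rfl
      have eA2 : ((hN, h0) : Arc).2 = h0 := rfl
      by_cases hxR : x ∈ R
      · have k1 := G1 x hxR
        have k2 := G2 x hxR
        unfold Cross ShareVertex
        rw [eA1, eA2]
        omega
      · have hxDs : x.2 ≤ q ∧ p ≤ x.1 := by
          by_contra hc
          exact hxR ⟨hx, hc⟩
        have k3 := hmin x hx hxDs.1 hxDs.2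
        unfold Cross ShareVertex
        rw [eA1, eA2]
        omega
    have hAH := homconfig_maximal hw hH hadmA hmax
    by_cases hAR : ((hN, h0) : Arc) ∈ R
    · exact (G1 _ hAR).2.1 rfl
    · have hAD : ((hN, h0) : Arc).2 ≤ q ∧ p ≤ ((hN, h0) : Arc).1 := by
        by_contra hc
        exact hAR ⟨hAH, hc⟩
      have k3 := hmin _ hAH hAD.1 hAD.2
      have eA2 : ((hN, h0) : Arc).2 = h0 := rfl
      omega
  · -- CASE B : no arc of `H` contains `z`
    push_neg at hDs
    obtain ⟨S, hS1, hS2⟩ := traversal_to_p hw H hadm' hpair p q hqp hdvdpq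
      (fun x hx h1 h2 => hDs x hx (by omega))
      (fun x hx hc => hF5 x hx ⟨hc, hDs x hx (by omega)⟩)
      hF1 hF2 hF3
    have hd1 : (1-w) ∣ ((S.card : ℤ) - (-w)) := by
      have hexp : (S.card : ℤ) - (-w) = (p - q + 1) - (p - q - S.card) - (1-w) := by ring
      rw [hexp]
      exact dvd_sub (dvd_sub hdvdpq hS2) (dvd_refl _)
    have hc1 : -w ≤ (S.card : ℤ) :=
      dvd_lb (by omega) hd1 (by positivity) (by omega) (by omega)
    have hsub : ↑S ⊆ NoOverarcIsolated H :=
      fun m hm => hole_iff_noi.mp ((hS1 m).mp hm).1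
    have hle := Set.ncard_le_ncard hsub hfin
    rw [Set.ncard_coe_finset] at hle
    omega

/-- Theorem 4.3 ((2) ⇔ (3)): a `|w|`-Hom-configuration `H` is a right `|w|`-Riedtmann
configuration iff there are at most `|w| - 1` isolated vertices with no overarc. -/
theorem stmt8 (w : ℤ) (hw : w ≤ -1) (H : Set Arc) (hH : IsHomConfig w H) :
    IsRightRiedtmann w H ↔
      ((NoOverarcIsolated H).Finite ∧ ((NoOverarcIsolated H).ncard : ℤ) ≤ -w - 1) := by
  constructor
  · intro hR
    by_contra hbig
    exact dir1 hw hH hbig hR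
  · rintro ⟨hfin, hcard⟩
    refine ⟨hH.1, homconfig_pairwise hw hH, ?_⟩
    intro z hzadm
    by_contra hc
    push_neg at hc
    exact dir2 hw hH hfin hcard hzadm (fun x hx i h1 h2 hext => hc x hx i h1 h2 hext)

end SphericalArcs
end

section
/- Every |w|-Hom-configuration H is nonempty and contains an arc of minimum length, i.e. an arc (t,u) with t − u = |w|. -/
/- Combinatorial model of the triangulated category `T_w` generated by a `w`-spherical
object (`w ≤ -1`), via `d`-admissible arcs of the ∞-gon, where `d = w - 1`,
`|d| = 1 - w`, `|w| = -w`. -/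

namespace SphericalArcs

/-- If `X` crosses `A` from above-right, there is `i ∈ [w,0]` with `Ext^i(X,A) ≠ 0`. -/
lemma cross_ext (w : ℤ) (hw : w ≤ -1) (A X : Arc) (hA : Adm w A) (hX : Adm w X)
    (h1 : A.2 < X.2) (h2 : X.2 < A.1) (h3 : A.1 < X.1) :
    ∃ i : ℤ, w ≤ i ∧ i ≤ 0 ∧ ExtNe w i X A := by
  obtain ⟨hA1, hA2, hA3⟩ := hA
  obtain ⟨hX1, hX2, hX3⟩ := hX
  set D : ℤ := 1 - w with hD
  have hD2 : 2 ≤ D := by omega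
  set α : ℤ := X.1 - A.1 with hα
  have hα1 : 1 ≤ α := by omega
  set j : ℤ := α / D with hj
  set ρ : ℤ := α % D with hρ
  have hρ0 : 0 ≤ ρ := Int.emod_nonneg _ (by omega)
  have hρD : ρ < D := Int.emod_lt_of_pos _ (by omega)
  have hjD : D * j + ρ = α := Int.mul_ediv_add_emod α D
  have hj0 : 0 ≤ j := Int.ediv_nonneg (by omega) (by omega)
  have hjD' : j * D = α - ρ := by rw [mul_comm]; linarith [hjD]
  -- D ∣ (X.2 - A.2) - ρ
  have hd1 : D ∣ α - ρ := ⟨j, by linarith [hjD]⟩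
  have hd2 : D ∣ α - (X.2 - A.2) := by
    have h := dvd_sub hX3 hA3
    have he : α - (X.2 - A.2) = (X.1 - X.2 + 1) - (A.1 - A.2 + 1) := by ring
    rwa [he]
  have hd3 : D ∣ ρ - (X.2 - A.2) := by
    have h := dvd_sub hd2 hd1
    have he : ρ - (X.2 - A.2) = (α - (X.2 - A.2)) - (α - ρ) := by ring
    rwa [he]
  have hργ : ρ ≤ X.2 - A.2 := by
    by_contra hlt
    push_neg at hlt
    have hpos : 0 < ρ - (X.2 - A.2) := by omega
    have := Int.le_of_dvd hpos hd3
    omega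
  -- j ≤ kk w X - 1
  have hkX : kk w X * D = X.1 - X.2 + 1 := Int.ediv_mul_cancel hX3
  have hβρ : D ∣ (A.1 - X.2) + ρ + 1 := by
    have h := dvd_sub hX3 hd1
    have he : (A.1 - X.2) + ρ + 1 = (X.1 - X.2 + 1) - (α - ρ) := by ring
    rwa [he]
  have hβρD : D ≤ A.1 - X.2 + ρ + 1 := Int.le_of_dvd (by omega) hβρ
  have hjk : j ≤ kk w X - 1 := by
    have h1' : (j + 1) * D = j * D + D := by ring
    have h2' : (j + 1) * D ≤ kk w X * D := by
      rw [h1', hjD', hkX]; linarith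
    have := le_of_mul_le_mul_right h2' (by omega : (0:ℤ) < D)
    omega
  refine ⟨-ρ, by omega, by omega, Or.inl ?_⟩
  refine ⟨⟨by omega, by omega, ?_⟩, ⟨j, hj0, hjk, ?_⟩, ?_⟩
  · have he : (A.1 - -ρ, A.2 - -ρ).1 - (A.1 - -ρ, A.2 - -ρ).2 + 1 = A.1 - A.2 + 1 := by
      simp
    rw [he]; exact hA3
  · show A.1 - -ρ = X.1 + j * (w - 1)
    have he : j * (w - 1) = -(j * D) := by rw [hD]; ring
    rw [he, hjD']; omega
  · show A.2 - -ρ ≤ X.2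
    omega

/-- If `Ext^i(x,(p,p+w)) ≠ 0` for some `i ∈ [w,0]`, then `p` lies in one of the
two forbidden intervals. -/
lemma ext_min_endpoint (w : ℤ) (hw : w ≤ -1) (x : Arc) (hx : Adm w x) (p i : ℤ)
    (hiw : w ≤ i) (hi0 : i ≤ 0) (hE : ExtNe w i x (p, p + w)) :
    (x.2 ≤ p ∧ p ≤ x.2 - w) ∨ (x.1 ≤ p ∧ p ≤ x.1 - w) := by
  have hkx : kk w x * (1 - w) = x.1 - x.2 + 1 := Int.ediv_mul_cancel hx.2.2
  have hkS : kk w (Serre w x) = kk w x := by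
    unfold kk Serre
    norm_num
  rcases hE with ⟨hadm, ⟨j, hj0, hj1, hc1⟩, hc2⟩ | ⟨hadm, ⟨j, hj0, hj1, hc2⟩, hc1⟩
  · left
    simp only at hc1 hc2
    have hm : j * (1 - w) ≤ (kk w x - 1) * (1 - w) :=
      mul_le_mul_of_nonneg_right hj1 (by omega)
    have he : (kk w x - 1) * (1 - w) = kk w x * (1 - w) - (1 - w) := by ring
    have hjw : j * (w - 1) = -(j * (1 - w)) := by ring
    constructor <;> nlinarith [hm, he, hkx, hc1, hc2, hjw, hiw, hi0]
  · right
    rw [hkS] at hj1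
    simp only [Serre] at hc1 hc2
    have hm : j * (1 - w) ≤ (kk w x - 1) * (1 - w) :=
      mul_le_mul_of_nonneg_right hj1 (by omega)
    have he : (kk w x - 1) * (1 - w) = kk w x * (1 - w) - (1 - w) := by ring
    have hjw : j * (w - 1) = -(j * (1 - w)) := by ring
    constructor <;> nlinarith [hm, he, hkx, hc1, hc2, hjw, hiw, hi0]

/-- Every `|w|`-Hom-configuration is nonempty and contains an arc of minimum length,
i.e. an arc `(t,u)` with `t - u = |w|`. -/
theorem stmt10 (w : ℤ) (hw : w ≤ -1) (H : Set Arc) (hH : IsHomConfig w H) :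
    ∃ a ∈ H, a.1 - a.2 = -w := by
  classical
  by_contra h0
  push_neg at h0
  obtain ⟨hHa, hiff⟩ := hH
  -- every arc in H has length ≥ 1 - 2w
  have hlen : ∀ x ∈ H, 1 - 2*w ≤ x.1 - x.2 := by
    intro x hx
    obtain ⟨hlt, hge, c, hc⟩ := hHa x hx
    have hne := h0 x hx
    have hc1 : 1 ≤ c := by nlinarith
    have hc2 : c ≠ 1 := by
      intro h; rw [h, mul_one] at hc; omega
    have hc3 : 2 ≤ c := by omega
    nlinarith
  -- membership helper
  have hmem0 : ∀ h : Arc, Adm w h →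
      (∀ x ∈ H, ∀ i : ℤ, w ≤ i → i ≤ 0 → ¬ ExtNe w i x h) → h ∈ H := by
    intro h hadm hcond
    exact (hiff h hadm).mpr
      ⟨fun x hx i hi1 hi2 => hcond x hx i (by omega) (by omega),
       fun x hx _ => ⟨hcond x hx 0 (by omega) le_rfl, hcond x hx w le_rfl (by omega)⟩⟩
  by_cases hne : H.Nonempty
  · -- choose an arc of least length
    obtain ⟨x0, hx0⟩ := hne
    obtain ⟨L, ⟨a, haH, haL⟩, hLmin⟩ :=
      Int.exists_least_of_bdd (P := fun n => ∃ x ∈ H, x.1 - x.2 = n)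
        ⟨-w, fun z ⟨x, hx, hxz⟩ => by
          have := (hHa x hx).2.1; omega⟩
        ⟨x0.1 - x0.2, x0, hx0, rfl⟩
    have hamin : ∀ x ∈ H, a.1 - a.2 ≤ x.1 - x.2 := by
      intro x hx
      have := hLmin (x.1 - x.2) ⟨x, hx, rfl⟩
      omega
    set p : ℤ := a.2 - w + 1 with hp
    have hLa : 1 - 2*w ≤ a.1 - a.2 := hlen a haH
    have hadm_h : Adm w (p, p + w) := by
      refine ⟨by omega, by omega, ?_⟩
      have he : (p, p + w).1 - (p, p + w).2 + 1 = 1 - w := by simp; ring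
      rw [he]
    have key : ∀ x ∈ H, ∀ i : ℤ, w ≤ i → i ≤ 0 → ¬ ExtNe w i x (p, p + w) := by
      intro x hx i hi1 hi2 hE
      have hx2 := ext_min_endpoint w hw x (hHa x hx) p i hi1 hi2 hE
      have hxmin := hamin x hx
      rcases hx2 with ⟨he1, he2⟩ | ⟨he1, he2⟩
      · -- a.2 < x.2 < a.1
        have hb1 : a.2 < x.2 := by omega
        have hb2 : x.2 < a.1 := by omega
        by_cases hc : x.1 ≤ a.1
        · omega
        · push_neg at hc
          obtain ⟨i', hi'1, hi'2, hE'⟩ :=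
            cross_ext w hw a x (hHa a haH) (hHa x hx) hb1 hb2 hc
          have hconda := (hiff a (hHa a haH)).mp haH
          have hxa : x ≠ a := by
            intro hEq; rw [hEq] at hc; omega
          rcases (by omega : i' = w ∨ i' = 0 ∨ (w + 1 ≤ i' ∧ i' ≤ -1)) with h | h | ⟨h, h'⟩
          · exact (hconda.2 x hx hxa).2 (h ▸ hE')
          · exact (hconda.2 x hx hxa).1 (h ▸ hE')
          · exact hconda.1 x hx i' h h' hE'
      · -- a.2 < x.1 < a.1
        have hb1 : a.2 < x.1 := by omega
        have hb2 : x.1 < a.1 := by omega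
        by_cases hc : a.2 ≤ x.2
        · omega
        · push_neg at hc
          obtain ⟨i', hi'1, hi'2, hE'⟩ :=
            cross_ext w hw x a (hHa x hx) (hHa a haH) hc hb1 hb2
          have hcondx := (hiff x (hHa x hx)).mp hx
          have hax : a ≠ x := by
            intro hEq; rw [hEq] at hb2; omega
          rcases (by omega : i' = w ∨ i' = 0 ∨ (w + 1 ≤ i' ∧ i' ≤ -1)) with h | h | ⟨h, h'⟩
          · exact (hcondx.2 a haH hax).2 (h ▸ hE')
          · exact (hcondx.2 a haH hax).1 (h ▸ hE')
          · exact hcondx.1 a haH i' h h' hE'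
    have hmem := hmem0 (p, p + w) hadm_h key
    have := h0 (p, p + w) hmem
    simp at this
  · -- H empty: the arc (0, w) satisfies the conditions vacuously
    rw [Set.not_nonempty_iff_eq_empty] at hne
    have hadm0 : Adm w ((0 : ℤ), w) := by
      refine ⟨by omega, by omega, ?_⟩
      have he : ((0 : ℤ), w).1 - ((0 : ℤ), w).2 + 1 = 1 - w := by simp; ring
      rw [he]
    have hmem := hmem0 ((0 : ℤ), w) hadm0 (by
      intro x hx; rw [hne] at hx; exact absurd hx (Set.notMem_empty x))
    rw [hne] at hmem
    exact absurd hmem (Set.notMem_empty _)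

end SphericalArcs
end

section
/- Let a = (t,u) be a d-admissible arc. A d-admissible arc b = (x,y) satisfies Ext^i(a,b) = 0 for all i ∈ {w, …, 0} if and only if either u < y < x < t, or both x and y lie outside the closed interval [u,t]. -/
/- Combinatorial model of the triangulated category `T_w` generated by a `w`-spherical
object (`w ≤ -1`), via `d`-admissible arcs of the ∞-gon, where `d = w - 1`,
`|d| = 1 - w`, `|w| = -w`. -/

namespace SphericalArcs

private lemma nonneg_of_eq_mul (m M v : ℤ) (hm : 0 < m) (hv : v = m * M) (hlb : -m < v) :
    0 ≤ v := by
  rcases le_or_gt 0 M with h | h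
  · calc (0:ℤ) ≤ m * M := mul_nonneg hm.le h
      _ = v := hv.symm
  · have h2 : m * M ≤ m * (-1) := mul_le_mul_of_nonneg_left (by omega) hm.le
    linarith

/-- Theorem 5.1 (description of the perpendicular category `a^⊥`): a `d`-admissible
arc `b = (x,y)` satisfies `Ext^i(a,b) = 0` for all `i ∈ {w, …, 0}` iff either
`u < y < x < t`, or both `x` and `y` lie outside the closed interval `[u,t]`. -/
theorem stmt11 (w : ℤ) (hw : w ≤ -1) (a b : Arc) (ha : Adm w a) (hb : Adm w b) :
    (∀ i : ℤ, w ≤ i → i ≤ 0 → ¬ ExtNe w i a b) ↔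
      ((a.2 < b.2 ∧ b.2 < b.1 ∧ b.1 < a.1) ∨
       ((b.1 < a.2 ∨ a.1 < b.1) ∧ (b.2 < a.2 ∨ a.1 < b.2))) := by
  obtain ⟨t, u⟩ := a
  obtain ⟨x, y⟩ := b
  show (∀ i : ℤ, w ≤ i → i ≤ 0 → ¬ ExtNe w i (t, u) (x, y)) ↔
      ((u < y ∧ y < x ∧ x < t) ∨ ((x < u ∨ t < x) ∧ (y < u ∨ t < y)))
  have hut : u < t := ha.1
  have hwa : -w ≤ t - u := ha.2.1
  obtain ⟨k, hk⟩ := ha.2.2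
  have hyx : y < x := hb.1
  have hwb : -w ≤ x - y := hb.2.1
  obtain ⟨k', hk'⟩ := hb.2.2
  have hk : t - u + 1 = (1 - w) * k := hk
  have hk' : x - y + 1 = (1 - w) * k' := hk'
  have hk1 : 1 ≤ k := by
    have h1 : (1 - w) * 1 ≤ (1 - w) * k := by linarith
    exact le_of_mul_le_mul_left h1 (by omega)
  have hkk : kk w (t, u) = k := by
    show (t - u + 1) / (1 - w) = k
    rw [hk]; exact Int.mul_ediv_cancel_left _ (by omega)
  have hkkS : kk w (Serre w (t, u)) = k := by
    show (t - w - (u - w) + 1) / (1 - w) = k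
    rw [show t - w - (u - w) + 1 = (1 - w) * k by linarith]
    exact Int.mul_ediv_cancel_left _ (by omega)
  have hadm : ∀ e : ℤ, Adm w (x - e, y - e) := by
    intro e
    exact ⟨by show y - e < x - e; omega, by show -w ≤ x - e - (y - e); omega,
      ⟨k', by show x - e - (y - e) + 1 = (1 - w) * k'; linarith⟩⟩
  constructor
  · intro h
    have hP : ¬ ((y ≤ u ∧ u ≤ x ∧ x ≤ t) ∨ (t ≤ x ∧ u ≤ y ∧ y ≤ t)) := by
      rintro (⟨h1, h2, h3⟩ | ⟨h1, h2, h3⟩)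
      · set r := (t - x) % (1 - w) with hrdef
        set q := (t - x) / (1 - w) with hqdef
        have hmod : (1 - w) * q + r = t - x := Int.mul_ediv_add_emod _ _
        have hr0 : 0 ≤ r := Int.emod_nonneg _ (by omega)
        have hrlt : r < 1 - w := Int.emod_lt_of_pos _ (by omega)
        have hq0 : 0 ≤ q := Int.ediv_nonneg (by omega) (by omega)
        have hqk : q < k := by
          have h4 : (1 - w) * q < (1 - w) * k := by linarith
          exact lt_of_mul_lt_mul_left h4 (by omega)
        have hcong : u - y - r = (1 - w) * (q + k' - k) := by
          linear_combination hk' - hk - hmod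
        have hyr : y + r ≤ u := by
          have h5 : 0 ≤ u - y - r :=
            nonneg_of_eq_mul (1 - w) (q + k' - k) _ (by omega) hcong (by omega)
          omega
        exact h (-r) (by omega) (by omega)
          (Or.inl ⟨hadm (-r), ⟨q, hq0, by rw [hkk]; omega,
            by show x - -r = t + q * (w - 1); linarith⟩, by show y - -r ≤ u; omega⟩)
      · set s := (y - u) % (1 - w) with hsdef
        set q := (y - u) / (1 - w) with hqdef
        have hmod : (1 - w) * q + s = y - u := Int.mul_ediv_add_emod _ _
        have hs0 : 0 ≤ s := Int.emod_nonneg _ (by omega)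
        have hslt : s < 1 - w := Int.emod_lt_of_pos _ (by omega)
        have hq0 : 0 ≤ q := Int.ediv_nonneg (by omega) (by omega)
        have hqk : q < k := by
          have h4 : (1 - w) * q < (1 - w) * k := by linarith
          exact lt_of_mul_lt_mul_left h4 (by omega)
        have hcong : x - t - s = (1 - w) * (k' + q - k) := by
          linear_combination hk' - hmod - hk
        have hxs : t + s ≤ x := by
          have h5 : 0 ≤ x - t - s :=
            nonneg_of_eq_mul (1 - w) (k' + q - k) _ (by omega) hcong (by omega)
          omega
        exact h (s + w) (by omega) (by omega)
          (Or.inr ⟨hadm (s + w), ⟨q, hq0, by rw [hkkS]; omega,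
            by show y - (s + w) = u - w - q * (w - 1); linarith⟩,
            by show t - w ≤ x - (s + w); omega⟩)
    omega
  · rintro hR i hi1 hi2 hEx
    rcases hEx with ⟨-, ⟨j, hj0, hj1, hxe⟩, hye⟩ | ⟨-, ⟨j, hj0, hj1, hye⟩, hxe⟩
    · rw [hkk] at hj1
      have hxe' : x - i = t + j * (w - 1) := hxe
      have hye' : y - i ≤ u := hye
      have h1 : y ≤ u := by omega
      have h2 : u ≤ x := by
        linarith [mul_nonneg (show (0:ℤ) ≤ k - 1 - j by omega)
          (show (0:ℤ) ≤ 1 - w by omega)]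
      have h3 : x ≤ t := by
        linarith [mul_nonneg hj0 (show (0:ℤ) ≤ 1 - w by omega)]
      omega
    · rw [hkkS] at hj1
      have hye' : y - i = u - w - j * (w - 1) := hye
      have hxe' : t - w ≤ x - i := hxe
      have h1 : t ≤ x := by omega
      have h2 : u ≤ y := by
        linarith [mul_nonneg hj0 (show (0:ℤ) ≤ 1 - w by omega)]
      have h3 : y ≤ t := by
        linarith [mul_nonneg (show (0:ℤ) ≤ k - 1 - j by omega)
          (show (0:ℤ) ≤ 1 - w by omega)]
      omega

end SphericalArcs
end

section
/- Let a = (t,u) be a d-admissible arc and let φ : ℤ \ [u,t] → ℤ be the map defined by φ(t+i) = i − 1 and φ(u−i) = −i for every integer i ≥ 1. Then φ is a bijection; the assignment (x,y) ↦ (φ(x), φ(y)) is a bijection from the set of d-admissible arcs both of whose endpoints lie outside the closed interval [u,t] onto the set of all d-admissible arcs; and for any two arcs b, b' in its domain, Hom(b, b') ≠ 0 if and only if Hom((φ×φ)(b), (φ×φ)(b')) ≠ 0. -/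
/- Combinatorial model of the triangulated category `T_w` generated by a `w`-spherical
object (`w ≤ -1`), via `d`-admissible arcs of the ∞-gon, where `d = w - 1`,
`|d| = 1 - w`, `|w| = -w`. -/

namespace SphericalArcs

/-- The map `φ : ℤ \ [u,t] → ℤ`, `φ(t+i) = i - 1`, `φ(u-i) = -i` for `i ≥ 1`. -/
def phi (a : Arc) (z : ℤ) : ℤ := if a.1 < z then z - a.1 - 1 else z - a.2

private lemma dvd_shift {n A B : ℤ} (h : n ∣ A - B) (m : ℤ) :
    n ∣ A + m ↔ n ∣ B + m := by
  obtain ⟨k, hk⟩ := h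
  constructor
  · rintro ⟨j, hj⟩
    refine ⟨j - k, ?_⟩
    have : n * (j - k) = n * j - n * k := by ring
    linarith
  · rintro ⟨j, hj⟩
    refine ⟨j + k, ?_⟩
    have : n * (j + k) = n * j + n * k := by ring
    linarith

private lemma adm_iff {w : ℤ} (hw : w ≤ -1) (b : Arc) :
    Adm w b ↔ b.2 < b.1 ∧ (1 - w) ∣ (b.1 - b.2 + 1) := by
  constructor
  · rintro ⟨h1, _, h3⟩; exact ⟨h1, h3⟩
  · rintro ⟨h1, h3⟩
    have h4 := Int.le_of_dvd (by omega) h3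
    exact ⟨h1, by omega, h3⟩

private lemma phi_lt_iff {a : Arc} (hA : a.2 < a.1) {x y : ℤ}
    (hx : x < a.2 ∨ a.1 < x) (hy : y < a.2 ∨ a.1 < y) :
    phi a x < phi a y ↔ x < y := by
  unfold phi; split_ifs <;> omega

private lemma phi_le_iff {a : Arc} (hA : a.2 < a.1) {x y : ℤ}
    (hx : x < a.2 ∨ a.1 < x) (hy : y < a.2 ∨ a.1 < y) :
    phi a x ≤ phi a y ↔ x ≤ y := by
  unfold phi; split_ifs <;> omega

private lemma phi_sub_dvd {w : ℤ} {a : Arc} (hd : (1 - w) ∣ (a.1 - a.2 + 1)) (x y : ℤ) :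
    (1 - w) ∣ (phi a x - phi a y - (x - y)) := by
  obtain ⟨k, hk⟩ := hd
  unfold phi
  split_ifs with h1 h2 h2
  · exact ⟨0, by ring⟩
  · refine ⟨-k, ?_⟩
    have : (1 - w) * -k = -((1 - w) * k) := by ring
    linarith
  · exact ⟨k, by linarith⟩
  · exact ⟨0, by ring⟩

private lemma phi_dvd_iff {w : ℤ} {a : Arc} (hd : (1 - w) ∣ (a.1 - a.2 + 1)) (x y m : ℤ) :
    (1 - w) ∣ (phi a x - phi a y + m) ↔ (1 - w) ∣ (x - y + m) :=
  dvd_shift (phi_sub_dvd hd x y) m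

private lemma phi_dvd_iff0 {w : ℤ} {a : Arc} (hd : (1 - w) ∣ (a.1 - a.2 + 1)) (x y : ℤ) :
    (1 - w) ∣ (phi a x - phi a y) ↔ (1 - w) ∣ (x - y) := by
  have := phi_dvd_iff hd x y 0
  simpa using this

private lemma adm_transfer {w : ℤ} {a : Arc} (hw : w ≤ -1) (hA : a.2 < a.1)
    (hd : (1 - w) ∣ (a.1 - a.2 + 1)) {b : Arc}
    (h1 : b.1 < a.2 ∨ a.1 < b.1) (h2 : b.2 < a.2 ∨ a.1 < b.2) :
    Adm w b ↔ Adm w (phi a b.1, phi a b.2) := by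
  rw [adm_iff hw, adm_iff hw]
  dsimp only
  rw [phi_lt_iff hA h2 h1, phi_dvd_iff hd b.1 b.2 1]

private lemma homNe_iff {w : ℤ} (hw : w ≤ -1) {b c : Arc} (hb : Adm w b) :
    HomNe w b c ↔ Adm w c ∧
      (((1 - w) ∣ (b.1 - c.1) ∧ b.2 < c.1 ∧ c.1 ≤ b.1 ∧ c.2 ≤ b.2) ∨
       ((1 - w) ∣ (c.2 - b.2 + 1) ∧ b.2 < c.2 ∧ c.2 ≤ b.1 ∧ b.1 < c.1)) := by
  obtain ⟨hlt, hge, K, hK⟩ := hb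
  have hD : (2:ℤ) ≤ 1 - w := by omega
  have hK1 : 1 ≤ K := by
    have h5 : (1 - w) * 0 < (1 - w) * K := by rw [mul_zero]; linarith
    have := lt_of_mul_lt_mul_left h5 (by omega : (0:ℤ) ≤ 1 - w)
    omega
  have hkk : kk w b = K := by
    unfold kk; rw [hK]; exact Int.mul_ediv_cancel_left _ (by omega)
  have hkkS : kk w (Serre w b) = K := by
    unfold kk Serre
    dsimp only
    rw [show (b.1 - w) - (b.2 - w) + 1 = (1 - w) * K by linarith]
    exact Int.mul_ediv_cancel_left _ (by omega)
  have claim1 : Fplus w b c ↔ Adm w c ∧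
      ((1 - w) ∣ (b.1 - c.1) ∧ b.2 < c.1 ∧ c.1 ≤ b.1 ∧ c.2 ≤ b.2) := by
    constructor
    · rintro ⟨hc, ⟨i, hi0, hi1, hce⟩, hle⟩
      rw [hkk] at hi1
      have e1 : i * (w - 1) = -((1 - w) * i) := by ring
      have e2 : 0 ≤ (1 - w) * i := mul_nonneg (by omega) hi0
      have e3 : (1 - w) * i ≤ (1 - w) * (K - 1) :=
        mul_le_mul_of_nonneg_left hi1 (by omega)
      have e4 : (1 - w) * (K - 1) = (1 - w) * K - (1 - w) := by ring
      exact ⟨hc, ⟨i, by linarith⟩, by linarith, by linarith, hle⟩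
    · rintro ⟨hc, ⟨j, hj⟩, h1, h2, h3⟩
      have hj0 : 0 ≤ j := by
        have h5 : (1 - w) * 0 ≤ (1 - w) * j := by rw [mul_zero]; linarith
        exact le_of_mul_le_mul_left h5 (by omega)
      have hjK : j < K := by
        have h5 : (1 - w) * j < (1 - w) * K := by linarith
        exact lt_of_mul_lt_mul_left h5 (by omega)
      have e1 : j * (w - 1) = -((1 - w) * j) := by ring
      exact ⟨hc, ⟨j, hj0, by omega, by linarith⟩, h3⟩
  have claim2 : Fminus w (Serre w b) c ↔ Adm w c ∧
      ((1 - w) ∣ (c.2 - b.2 + 1) ∧ b.2 < c.2 ∧ c.2 ≤ b.1 ∧ b.1 < c.1) := by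
    constructor
    · rintro ⟨hc, ⟨i, hi0, hi1, hce⟩, hle⟩
      rw [hkkS] at hi1
      have hce' : c.2 = b.2 - w - i * (w - 1) := hce
      have hle' : b.1 - w ≤ c.1 := hle
      have e1 : (1 - w) * (i + 1) = -w - i * (w - 1) + 1 := by ring
      have e2 : 0 ≤ (1 - w) * i := mul_nonneg (by omega) hi0
      have e2' : i * (w - 1) = -((1 - w) * i) := by ring
      have e3 : (1 - w) * (i + 1) ≤ (1 - w) * K :=
        mul_le_mul_of_nonneg_left (by omega) (by omega)
      refine ⟨hc, ⟨i + 1, by linarith⟩, by linarith, by linarith, by linarith⟩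
    · rintro ⟨hc, ⟨j, hj⟩, h1, h2, h3⟩
      have hj1 : 0 < j := by
        have h5 : (1 - w) * 0 < (1 - w) * j := by rw [mul_zero]; linarith
        exact lt_of_mul_lt_mul_left h5 (by omega)
      have hjK : j ≤ K := by
        have h5 : (1 - w) * j ≤ (1 - w) * K := by linarith
        exact le_of_mul_le_mul_left h5 (by omega)
      obtain ⟨hclt, hcge, M, hM⟩ := hc
      refine ⟨⟨hclt, hcge, M, hM⟩, ⟨j - 1, by omega, ?_, ?_⟩, ?_⟩
      · rw [hkkS]; omega
      · show c.2 = b.2 - w - (j - 1) * (w - 1)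
        have e : (j - 1) * (w - 1) = -((1 - w) * j) - w + 1 := by ring
        linarith
      · show b.1 - w ≤ c.1
        have hdvd : (1 - w) ∣ (c.1 - b.1 + 1) := by
          refine ⟨M + j - K, ?_⟩
          have e : (1 - w) * (M + j - K) =
              (1 - w) * M + (1 - w) * j - (1 - w) * K := by ring
          linarith
        have := Int.le_of_dvd (by linarith) hdvd
        linarith
  unfold HomNe
  rw [claim1, claim2]
  exact and_or_left.symm

/-- Theorem 5.1 (second part): `φ` is a bijection from `ℤ \ [u,t]` to `ℤ`; the induced
map on arcs is a bijection from the `d`-admissible arcs with both endpoints outside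
`[u,t]` onto all `d`-admissible arcs; and it preserves non-vanishing of `Hom`. -/
theorem stmt12 (w : ℤ) (hw : w ≤ -1) (a : Arc) (ha : Adm w a) :
    Set.BijOn (phi a) {z : ℤ | z < a.2 ∨ a.1 < z} Set.univ ∧
    Set.BijOn (fun b : Arc => ((phi a b.1, phi a b.2) : Arc))
      {b : Arc | Adm w b ∧ (b.1 < a.2 ∨ a.1 < b.1) ∧ (b.2 < a.2 ∨ a.1 < b.2)}
      {b : Arc | Adm w b} ∧
    ∀ b ∈ {b : Arc | Adm w b ∧ (b.1 < a.2 ∨ a.1 < b.1) ∧ (b.2 < a.2 ∨ a.1 < b.2)},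
      ∀ b' ∈ {b : Arc | Adm w b ∧ (b.1 < a.2 ∨ a.1 < b.1) ∧ (b.2 < a.2 ∨ a.1 < b.2)},
        (HomNe w b b' ↔ HomNe w (phi a b.1, phi a b.2) (phi a b'.1, phi a b'.2)) := by
  obtain ⟨hA, hge, hd⟩ := ha
  have part1 : Set.BijOn (phi a) {z : ℤ | z < a.2 ∨ a.1 < z} Set.univ := by
    refine ⟨fun z _ => Set.mem_univ _, ?_, ?_⟩
    · intro x hx y hy hxy
      simp only [Set.mem_setOf_eq] at hx hy
      unfold phi at hxy
      split_ifs at hxy <;> omega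
    · intro m _
      refine ⟨if 0 ≤ m then a.1 + m + 1 else a.2 + m, ?_, ?_⟩
      · simp only [Set.mem_setOf_eq]
        split_ifs <;> omega
      · unfold phi
        split_ifs <;> omega
  refine ⟨part1, ⟨?_, ?_, ?_⟩, ?_⟩
  · rintro b ⟨hb, h1, h2⟩
    exact (adm_transfer hw hA hd h1 h2).mp hb
  · rintro b ⟨hb, hb1, hb2⟩ b' ⟨hb', hb1', hb2'⟩ he
    have he1 : phi a b.1 = phi a b'.1 := congrArg Prod.fst he
    have he2 : phi a b.2 = phi a b'.2 := congrArg Prod.snd he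
    have k1 : b.1 = b'.1 := part1.injOn hb1 hb1' he1
    have k2 : b.2 = b'.2 := part1.injOn hb2 hb2' he2
    exact Prod.ext k1 k2
  · rintro c hc
    have hc' : Adm w c := hc
    set X : ℤ := if 0 ≤ c.1 then a.1 + c.1 + 1 else a.2 + c.1 with hX
    set Y : ℤ := if 0 ≤ c.2 then a.1 + c.2 + 1 else a.2 + c.2 with hY
    have hx : phi a X = c.1 := by
      rw [hX]; unfold phi; split_ifs <;> omega
    have hy : phi a Y = c.2 := by
      rw [hY]; unfold phi; split_ifs <;> omega
    have hxd : X < a.2 ∨ a.1 < X := by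
      rw [hX]; split_ifs <;> omega
    have hyd : Y < a.2 ∨ a.1 < Y := by
      rw [hY]; split_ifs <;> omega
    have hadm : Adm w (X, Y) := by
      rw [adm_transfer hw hA hd (b := (X, Y)) hxd hyd]
      dsimp only
      rw [hx, hy]
      exact hc'
    refine ⟨(X, Y), ⟨hadm, hxd, hyd⟩, ?_⟩
    show (phi a X, phi a Y) = c
    rw [hx, hy]
  · rintro b ⟨hb, hb1, hb2⟩ b' ⟨hb', hb1', hb2'⟩
    have hPb : Adm w (phi a b.1, phi a b.2) := (adm_transfer hw hA hd hb1 hb2).mp hb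
    rw [homNe_iff hw hb, homNe_iff hw hPb]
    dsimp only
    rw [adm_transfer hw hA hd hb1' hb2',
        phi_dvd_iff0 hd b.1 b'.1,
        phi_lt_iff hA hb2 hb1',
        phi_le_iff hA hb1' hb1,
        phi_le_iff hA hb2' hb2,
        phi_dvd_iff hd b'.2 b.2 1,
        phi_lt_iff hA hb2 hb2',
        phi_le_iff hA hb2' hb1,
        phi_lt_iff hA hb1 hb1']

end SphericalArcs
end

section
/- In the quiver Γ(n,m) whose vertices are the (m+1)-diagonals of the N-gon, with an arrow {i,j} → {i, j+(m+1)} (indices taken modulo N) whenever both pairs are (m+1)-diagonals, the map τ{i,j} = {i−(m+1), j−(m+1)} is a well-defined bijection of the vertex set onto itself, and (Γ(n,m), τ) is a stable translation quiver: for all vertices D, D', there is an arrow D → D' if and only if there is an arrow τ(D') → D. -/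
namespace PolygonQuiver

abbrev NN (n m : ℕ) : ℕ := (n + 1) * (m + 1) - 2

def IsDiag (n m : ℕ) (p : Sym2 (ZMod (NN n m))) : Prop :=
  ∃ i j : ZMod (NN n m), p = s(i, j) ∧ i ≠ j ∧ (m + 1) ∣ ((j - i).val + 1)

def HasArrow (n m : ℕ) (p q : Sym2 (ZMod (NN n m))) : Prop :=
  IsDiag n m p ∧ IsDiag n m q ∧
  ∃ i j : ZMod (NN n m), p = s(i, j) ∧ q = s(i, j + (m + 1))

def tr (n m : ℕ) (p : Sym2 (ZMod (NN n m))) : Sym2 (ZMod (NN n m)) :=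
  Sym2.map (fun z => z - (m + 1)) p

lemma diag_tr {n m : ℕ} {p : Sym2 (ZMod (NN n m))} (h : IsDiag n m p) :
    IsDiag n m (tr n m p) := by
  obtain ⟨i, j, rfl, hne, hd⟩ := h
  refine ⟨i - (m+1), j - (m+1), rfl, by simpa using hne, ?_⟩
  have : j - (m+1) - (i - (m+1)) = j - i := by ring
  rw [this]; exact hd

lemma diag_shift {n m : ℕ} {p : Sym2 (ZMod (NN n m))} (h : IsDiag n m p) :
    IsDiag n m (Sym2.map (fun z => z + (m+1)) p) := by
  obtain ⟨i, j, rfl, hne, hd⟩ := h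
  refine ⟨i + (m+1), j + (m+1), rfl, by simpa using hne, ?_⟩
  have : j + (m+1) - (i + (m+1)) = j - i := by ring
  rw [this]; exact hd

lemma tr_shift {n m : ℕ} (p : Sym2 (ZMod (NN n m))) :
    tr n m (Sym2.map (fun z => z + (m+1)) p) = p := by
  unfold tr
  rw [Sym2.map_map]
  have : ((fun z : ZMod (NN n m) => z - (m+1)) ∘ fun z => z + (m+1)) = id := by
    funext z; simp
  rw [this, Sym2.map_id]; rfl

lemma shift_tr {n m : ℕ} (p : Sym2 (ZMod (NN n m))) :
    Sym2.map (fun z : ZMod (NN n m) => z + (m+1)) (tr n m p) = p := by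
  unfold tr
  rw [Sym2.map_map]
  have : ((fun z : ZMod (NN n m) => z + (m+1)) ∘ fun z => z - (m+1)) = id := by
    funext z; simp
  rw [this, Sym2.map_id]; rfl

/-- Lemma 6.1: `τ` is a well-defined bijection of the vertex set of `Γ(n,m)` onto
itself, and `(Γ(n,m), τ)` is a stable translation quiver: for all vertices `D, D'`,
there is an arrow `D → D'` iff there is an arrow `τ(D') → D`. -/
theorem stmt13 (n m : ℕ) (hn : 1 ≤ n) (hm : 1 ≤ m) :
    Set.BijOn (tr n m) {p | IsDiag n m p} {p | IsDiag n m p} ∧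
    (∀ p q : Sym2 (ZMod (NN n m)), IsDiag n m p → IsDiag n m q →
      (HasArrow n m p q ↔ HasArrow n m (tr n m q) p)) := by
  constructor
  · refine ⟨fun p hp => diag_tr hp, ?_, ?_⟩
    · intro p _ q _ h
      have := congrArg (Sym2.map (fun z : ZMod (NN n m) => z + (m+1))) h
      rwa [shift_tr, shift_tr] at this
    · intro q hq
      exact ⟨Sym2.map (fun z => z + (m+1)) q, diag_shift hq, tr_shift q⟩
  · intro p q hp hq
    constructor
    · rintro ⟨_, _, i, j, rfl, rfl⟩
      refine ⟨diag_tr hq, hp, j, i - (m+1), ?_, ?_⟩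
      · show Sym2.map _ s(i, j + (m+1)) = _
        rw [Sym2.map_pair_eq]
        simp [Sym2.eq_swap]
      · rw [sub_add_cancel, Sym2.eq_swap]
    · rintro ⟨_, _, i, j, htq, rfl⟩
      have hq2 : q = s(i + (m+1), j + (m+1)) := by
        have := congrArg (Sym2.map (fun z : ZMod (NN n m) => z + (m+1))) htq
        rw [shift_tr, Sym2.map_pair_eq] at this
        exact this
      refine ⟨hp, hq, j + (m+1), i, Sym2.eq_swap, ?_⟩
      rw [hq2, Sym2.eq_swap]

end PolygonQuiver
end
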